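/- arXiv:1805.02967 — 11 statements merged into one kernel-verified Lean document; each statement's English description precedes it below -/
import Mathlib

section
/- The vertices of the chain polytope C(Π) of a finite poset Π are exactly the characteristic functions of antichains of Π. In particular, the number of vertices of C(Π) equals the number of antichains of Π. -/
set_option linter.unusedSectionVars false

/-- The chain polytope of a finite poset `α`, as a subset of `α → ℝ`:
nonnegative functions whose sum along every chain is at most 1. -/
def chainPoly (α : Type*) [PartialOrder α] [Fintype α] : Set (α → ℝ) :=
  {g | (∀ i, 0 ≤ g i) ∧ ∀ s : Finset α, IsChain (· ≤ ·) (s : Set α) → ∑ i ∈ s, g i ≤ 1}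

section Aux

variable {α : Type*} [PartialOrder α] [Fintype α]

/-- The set of characteristic functions of antichains. -/
def antiSet (α : Type*) [PartialOrder α] : Set (α → ℝ) :=
  {x : α → ℝ | ∃ A : Set α, IsAntichain (· ≤ ·) A ∧ x = A.indicator (fun _ => (1 : ℝ))}

lemma exists_max_above (s : Finset α) {i : α} (hi : i ∈ s) :
    ∃ a ∈ s, i ≤ a ∧ ∀ j ∈ s, a ≤ j → j = a := by
  classical
  obtain ⟨a, ha, hmax⟩ := (s.filter (fun j => i ≤ j)).exists_maximal ⟨i, by simp [hi]⟩
  simp only [Finset.mem_filter] at ha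
  refine ⟨a, ha.1, ha.2, fun j hj haj => ?_⟩
  by_contra hne
  exact hne (le_antisymm (hmax (Finset.mem_filter.2 ⟨hj, ha.2.trans haj⟩) haj) haj)

lemma singleton_chain (i : α) : IsChain (· ≤ ·) ((({i} : Finset α) : Set α)) := by
  simp only [Finset.coe_singleton]
  exact Set.subsingleton_singleton.isChain

lemma le_one_of_mem_chainPoly {g : α → ℝ} (hg : g ∈ chainPoly α) (i : α) : g i ≤ 1 := by
  have := hg.2 {i} (singleton_chain i)
  simpa using this

lemma indicator_mem_chainPoly {A : Set α} (hA : IsAntichain (· ≤ ·) A) :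
    A.indicator (fun _ => (1 : ℝ)) ∈ chainPoly α := by
  classical
  constructor
  · intro i
    exact Set.indicator_nonneg (fun _ _ => zero_le_one) i
  · intro s hs
    have h1 : ∑ i ∈ s, A.indicator (fun _ => (1 : ℝ)) i
        = ((s.filter (· ∈ A)).card : ℝ) := by
      calc ∑ i ∈ s, A.indicator (fun _ => (1 : ℝ)) i
          = ∑ i ∈ s.filter (· ∈ A), (1 : ℝ) := by
            rw [Finset.sum_filter]
            exact Finset.sum_congr rfl fun i _ => by simp [Set.indicator_apply]
        _ = ((s.filter (· ∈ A)).card : ℝ) := by simp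
    have h2 : (s.filter (· ∈ A)).card ≤ 1 := by
      refine Finset.card_le_one.2 (fun a ha b hb => ?_)
      simp only [Finset.mem_filter] at ha hb
      by_contra hne
      rcases hs (Finset.mem_coe.2 ha.1) (Finset.mem_coe.2 hb.1) hne with h | h
      · exact hA ha.2 hb.2 hne h
      · exact hA hb.2 ha.2 (Ne.symm hne) h
    rw [h1]
    exact_mod_cast h2

lemma indicator_mem_extremePoints {A : Set α} (hA : IsAntichain (· ≤ ·) A) :
    A.indicator (fun _ => (1 : ℝ)) ∈ Set.extremePoints ℝ (chainPoly α) := by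
  rw [mem_extremePoints]
  refine ⟨indicator_mem_chainPoly hA, ?_⟩
  rintro y hy z hz ⟨a, b, ha, hb, hab, hx⟩
  have key : ∀ i, y i = A.indicator (fun _ => (1 : ℝ)) i ∧
      z i = A.indicator (fun _ => (1 : ℝ)) i := by
    intro i
    have hxi : a * y i + b * z i = A.indicator (fun _ => (1 : ℝ)) i := by
      have := congrFun hx i
      simpa [smul_eq_mul] using this
    have hy0 := hy.1 i
    have hz0 := hz.1 i
    by_cases hiA : i ∈ A
    · have hind : A.indicator (fun _ => (1 : ℝ)) i = 1 := by simp [hiA]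
      rw [hind] at hxi ⊢
      have hy1 := le_one_of_mem_chainPoly hy i
      have hz1 := le_one_of_mem_chainPoly hz i
      constructor <;> nlinarith
    · have hind : A.indicator (fun _ => (1 : ℝ)) i = 0 := by simp [hiA]
      rw [hind] at hxi ⊢
      constructor <;> nlinarith
  exact ⟨funext fun i => (key i).1, funext fun i => (key i).2⟩

lemma convex_chainPoly : Convex ℝ (chainPoly α) := by
  intro y hy z hz a b ha hb hab
  constructor
  · intro i
    have := hy.1 i; have := hz.1 i
    simp only [Pi.add_apply, Pi.smul_apply, smul_eq_mul]
    nlinarith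
  · intro s hs
    have h1 := hy.2 s hs
    have h2 := hz.2 s hs
    simp only [Pi.add_apply, Pi.smul_apply, smul_eq_mul]
    rw [Finset.sum_add_distrib, ← Finset.mul_sum, ← Finset.mul_sum]
    nlinarith

open Classical in
lemma hull_aux (n : ℕ) : ∀ g : α → ℝ, g ∈ chainPoly α →
    (Finset.univ.filter fun i => g i ≠ 0).card ≤ n → g ∈ convexHull ℝ (antiSet α) := by
  induction n with
  | zero =>
    intro g hg hcard
    have hzero : ∀ i, g i = 0 := by
      intro i
      by_contra h
      have : i ∈ Finset.univ.filter fun i => g i ≠ 0 := by simp [h]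
      have := Finset.card_pos.2 ⟨i, this⟩
      omega
    have : g = (∅ : Set α).indicator (fun _ => (1 : ℝ)) := by
      funext i; simp [hzero i]
    exact subset_convexHull ℝ _ ⟨∅, Set.pairwise_empty _, this⟩
  | succ n ih =>
    intro g hg hcard
    by_cases hle : (Finset.univ.filter fun i => g i ≠ 0).card ≤ n
    · exact ih g hg hle
    set supp := Finset.univ.filter fun i => g i ≠ 0 with hsupp
    have hmem_supp : ∀ i, i ∈ supp ↔ g i ≠ 0 := by intro i; simp [hsupp]
    have hpos : ∀ i ∈ supp, 0 < g i := fun i hi =>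
      (hg.1 i).lt_of_ne (Ne.symm ((hmem_supp i).1 hi))
    have hsne : supp.Nonempty := Finset.card_pos.1 (by omega)
    set A := supp.filter (fun i => ∀ j ∈ supp, i ≤ j → j = i) with hAdef
    have hAsub : A ⊆ supp := Finset.filter_subset _ _
    have hmaxmem : ∀ i ∈ supp, ∃ a ∈ A, i ≤ a := by
      intro i hi
      obtain ⟨a, ha, hia, hamax⟩ := exists_max_above supp hi
      exact ⟨a, Finset.mem_filter.2 ⟨ha, hamax⟩, hia⟩
    obtain ⟨a₀, ha₀A, _⟩ := hmaxmem _ hsne.choose_spec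
    have hAne : A.Nonempty := ⟨a₀, ha₀A⟩
    have hAanti : IsAntichain (· ≤ ·) ((A : Finset α) : Set α) := by
      intro x hx y hy hxy hle'
      have hx' := Finset.mem_filter.1 (Finset.mem_coe.1 hx)
      have hy' := Finset.mem_coe.1 hy
      exact hxy ((hx'.2 y (hAsub hy') hle')).symm
    obtain ⟨i₀, hi₀A, hmin⟩ := A.exists_min_image g hAne
    set lam := g i₀ with hlam
    have hlam_pos : 0 < lam := hpos i₀ (hAsub hi₀A)
    have hlam_le_one : lam ≤ 1 := le_one_of_mem_chainPoly hg i₀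
    -- key bound for chains disjoint from A
    have key : ∀ s : Finset α, IsChain (· ≤ ·) (s : Set α) → (∀ i ∈ s, i ∉ A) →
        ∑ i ∈ s, g i ≤ 1 - lam := by
      intro s hs hsA
      have hsum : ∑ i ∈ s.filter (· ∈ supp), g i = ∑ i ∈ s, g i := by
        refine Finset.sum_filter_of_ne (fun x _ hx => ?_)
        exact (hmem_supp x).2 hx
      rcases (s.filter (· ∈ supp)).eq_empty_or_nonempty with hemp | hne
      · rw [← hsum, hemp]
        simp
        linarith
      · obtain ⟨t, ht, htmax⟩ := (s.filter (· ∈ supp)).exists_maximal hne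
        have htop : ∀ x ∈ s.filter (· ∈ supp), x ≤ t := by
          intro x hx
          rcases eq_or_ne x t with rfl | hne'
          · exact le_refl x
          · rcases hs (Finset.mem_coe.2 (Finset.mem_filter.1 hx).1)
              (Finset.mem_coe.2 (Finset.mem_filter.1 ht).1) hne' with h | h
            · exact h
            · exact htmax hx h
        obtain ⟨a, haA, hta⟩ := hmaxmem t (Finset.mem_filter.1 ht).2
        have hnas : a ∉ s.filter (· ∈ supp) := by
          intro h
          exact hsA a (Finset.mem_filter.1 h).1 haA
        have hchain' : IsChain (· ≤ ·)
            ((insert a (s.filter (· ∈ supp)) : Finset α) : Set α) := by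
          simp only [Finset.coe_insert]
          intro x hx y hy hxy
          simp only [Set.mem_insert_iff, Finset.mem_coe] at hx hy
          rcases hx with rfl | hx <;> rcases hy with rfl | hy
          · exact absurd rfl hxy
          · exact Or.inr ((htop y hy).trans hta)
          · exact Or.inl ((htop x hx).trans hta)
          · exact hs (Finset.mem_coe.2 (Finset.mem_filter.1 hx).1)
              (Finset.mem_coe.2 (Finset.mem_filter.1 hy).1) hxy
        have hsum1 := hg.2 _ hchain'
        rw [Finset.sum_insert hnas] at hsum1
        have hga : lam ≤ g a := hmin a haA
        rw [← hsum]
        linarith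
    rcases eq_or_lt_of_le hlam_le_one with hlam1 | hlamlt
    · -- lam = 1 : g is itself the indicator of A
      have hA1 : ∀ i ∈ A, g i = 1 := by
        intro i hi
        have := hmin i hi
        have := le_one_of_mem_chainPoly hg i
        linarith [hlam1]
      have hsubA : ∀ i ∈ supp, i ∈ A := by
        intro i hi
        obtain ⟨a, haA, hia⟩ := hmaxmem i hi
        rcases eq_or_ne i a with rfl | hne'
        · exact haA
        · exfalso
          have hchain2 : IsChain (· ≤ ·) ((({i, a} : Finset α) : Set α)) := by
            intro x hx y hy hxy
            simp only [Finset.coe_insert, Set.mem_insert_iff, Finset.coe_singleton,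
              Set.mem_singleton_iff] at hx hy
            rcases hx with rfl | rfl <;> rcases hy with rfl | rfl
            · exact absurd rfl hxy
            · exact Or.inl hia
            · exact Or.inr hia
            · exact absurd rfl hxy
          have := hg.2 {i, a} hchain2
          rw [Finset.sum_pair hne'] at this
          have := hA1 a haA
          have := hpos i hi
          linarith
      have hgind : g = ((A : Finset α) : Set α).indicator (fun _ => (1 : ℝ)) := by
        funext i
        by_cases hi : i ∈ A
        · simp [Set.indicator_apply, hi, hA1 i hi]
        · have : g i = 0 := by
            by_contra h
            exact hi (hsubA i ((hmem_supp i).2 h))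
          simp [Set.indicator_apply, hi, this]
      exact subset_convexHull ℝ _ ⟨_, hAanti, hgind⟩
    · -- lam < 1 : peel off lam • χ_A
      set q := 1 - lam with hq
      have hqpos : 0 < q := by simp [hq]; linarith
      set g' := fun i => if i ∈ A then (g i - lam) / q else g i / q with hg'def
      have hsplit : ∀ i, g' i = g i / q - (if i ∈ A then lam / q else 0) := by
        intro i
        by_cases h : i ∈ A <;> simp [hg'def, h] <;> ring
      have hg'mem : g' ∈ chainPoly α := by
        constructor
        · intro i
          by_cases h : i ∈ A
          · have := hmin i h
            simp only [hg'def, if_pos h]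
            have : (0:ℝ) ≤ g i - lam := by linarith
            positivity
          · simp only [hg'def, if_neg h]
            have := hg.1 i
            positivity
        · intro s hs
          by_cases hsA : ∃ a ∈ s, a ∈ A
          · obtain ⟨a, has, haA⟩ := hsA
            have hfil : s.filter (· ∈ A) = {a} := by
              refine Finset.eq_singleton_iff_unique_mem.2 ⟨Finset.mem_filter.2 ⟨has, haA⟩, ?_⟩
              intro b hb
              have hb' := Finset.mem_filter.1 hb
              by_contra hne'
              rcases hs (Finset.mem_coe.2 hb'.1) (Finset.mem_coe.2 has) hne' with h | h
              · exact hAanti (Finset.mem_coe.2 hb'.2) (Finset.mem_coe.2 haA) hne' h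
              · exact hAanti (Finset.mem_coe.2 haA) (Finset.mem_coe.2 hb'.2) (Ne.symm hne') h
            have hsum : ∑ i ∈ s, g' i = (∑ i ∈ s, g i) / q - lam / q := by
              rw [Finset.sum_congr rfl (fun i _ => hsplit i), Finset.sum_sub_distrib,
                ← Finset.sum_filter, hfil, Finset.sum_singleton, Finset.sum_div]
            rw [hsum]
            have h1 := hg.2 s hs
            rw [div_sub_div_same, div_le_one hqpos]
            linarith
          · push_neg at hsA
            have hsum : ∑ i ∈ s, g' i = (∑ i ∈ s, g i) / q := by
              rw [Finset.sum_congr rfl (fun i hi => by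
                rw [hsplit i, if_neg (hsA i hi), sub_zero]), Finset.sum_div]
            rw [hsum, div_le_one hqpos]
            exact key s hs hsA
      have hsupp' : (Finset.univ.filter fun i => g' i ≠ 0) ⊆ supp.erase i₀ := by
        intro i hi
        simp only [Finset.mem_filter, Finset.mem_univ, true_and] at hi
        refine Finset.mem_erase.2 ⟨?_, ?_⟩
        · rintro rfl
          apply hi
          simp [hg'def, hi₀A, ← hlam]
        · by_contra h
          apply hi
          have hgi : g i = 0 := by
            by_contra h'
            exact h ((hmem_supp i).2 h')
          have hiA : i ∉ A := fun h' => h (hAsub h')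
          simp [hg'def, hiA, hgi]
      have hcard' : (Finset.univ.filter fun i => g' i ≠ 0).card ≤ n := by
        have h1 := Finset.card_le_card hsupp'
        have h2 : (supp.erase i₀).card = supp.card - 1 :=
          Finset.card_erase_of_mem (hAsub hi₀A)
        omega
      have hIH := ih g' hg'mem hcard'
      have hcomb : g = lam • ((A : Finset α) : Set α).indicator (fun _ => (1:ℝ)) + q • g' := by
        funext i
        simp only [Pi.add_apply, Pi.smul_apply, smul_eq_mul]
        by_cases h : i ∈ A
        · simp only [Set.indicator_apply, Finset.mem_coe, if_pos h, hg'def]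
          rw [mul_comm q, div_mul_cancel₀ _ (ne_of_gt hqpos)]
          ring
        · simp only [Set.indicator_apply, Finset.mem_coe, if_neg h, hg'def]
          rw [mul_comm q, div_mul_cancel₀ _ (ne_of_gt hqpos)]
          ring
      rw [hcomb]
      exact (convex_convexHull ℝ (antiSet α))
        (subset_convexHull ℝ _ ⟨_, hAanti, rfl⟩) hIH hlam_pos.le hqpos.le (by ring)

lemma chainPoly_eq_hull : chainPoly α = convexHull ℝ (antiSet α) := by
  classical
  apply Set.Subset.antisymm
  · intro g hg
    exact hull_aux (Finset.univ.filter fun i => g i ≠ 0).card g hg le_rfl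
  · refine convexHull_min ?_ convex_chainPoly
    rintro x ⟨A, hA, rfl⟩
    exact indicator_mem_chainPoly hA

end Aux

/-- The vertices (extreme points) of the chain polytope are exactly the characteristic
functions of antichains; in particular their number equals the number of antichains. -/
theorem stmt_1 (α : Type*) [PartialOrder α] [Fintype α] :
    Set.extremePoints ℝ (chainPoly α)
        = {x : α → ℝ | ∃ A : Set α, IsAntichain (· ≤ ·) A ∧ x = A.indicator (fun _ => (1 : ℝ))} ∧
      Nat.card (Set.extremePoints ℝ (chainPoly α))
        = Nat.card {A : Set α // IsAntichain (· ≤ ·) A} := by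
  have hEq : Set.extremePoints ℝ (chainPoly α) = antiSet α := by
    apply Set.Subset.antisymm
    · rw [chainPoly_eq_hull]
      exact extremePoints_convexHull_subset
    · rintro x ⟨A, hA, rfl⟩
      exact indicator_mem_extremePoints hA
  refine ⟨hEq, ?_⟩
  rw [hEq]
  have hinj : Function.Injective (fun A : Set α => A.indicator fun _ => (1:ℝ)) := by
    intro A B h
    ext i
    have := congrFun h i
    by_cases hA : i ∈ A <;> by_cases hB : i ∈ B <;>
      simp [Set.indicator_apply, hA, hB] at this ⊢
  have e : {A : Set α // IsAntichain (· ≤ ·) A} ≃ (antiSet α) := by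
    refine Equiv.ofBijective (fun A => ⟨A.1.indicator fun _ => 1, A.1, A.2, rfl⟩) ⟨?_, ?_⟩
    · intro A B h
      exact Subtype.ext (hinj (congrArg Subtype.val h))
    · rintro ⟨x, A, hA, rfl⟩
      exact ⟨⟨A, hA⟩, rfl⟩
  exact (Nat.card_congr e).symm
end

section
/- For a finite poset Π on d elements and every nonnegative integer k, the number of lattice points in the k-th dilate of the order polytope O(Π) equals the number of order-preserving maps from Π to {1,2,…,k+1}. -/
open scoped Pointwise
/-- The order polytope of a finite poset `α`, as a subset of `α → ℝ`. -/
def orderPoly (α : Type*) [PartialOrder α] [Fintype α] : Set (α → ℝ) :=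
  {x | (∀ i, 0 ≤ x i ∧ x i ≤ 1) ∧ ∀ i j : α, i ≤ j → x i ≤ x j}

lemma mem_smul_orderPoly (α : Type*) [PartialOrder α] [Fintype α] (k : ℕ) (x : α → ℤ) :
    (fun i => (x i : ℝ)) ∈ (k : ℝ) • orderPoly α ↔
      (∀ i, 0 ≤ x i ∧ x i ≤ k) ∧ ∀ i j : α, i ≤ j → x i ≤ x j := by
  constructor
  · rintro ⟨y, ⟨hy1, hy2⟩, hxy⟩
    have hx : ∀ i, (x i : ℝ) = (k : ℝ) * y i := fun i => by
      have := congrFun hxy i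
      simpa [smul_eq_mul] using this.symm
    have hk0 : (0 : ℝ) ≤ (k : ℝ) := Nat.cast_nonneg k
    refine ⟨fun i => ?_, fun i j hij => ?_⟩
    · have h1 : (0 : ℝ) ≤ (x i : ℝ) := by
        rw [hx i]; exact mul_nonneg hk0 (hy1 i).1
      have h2 : (x i : ℝ) ≤ (k : ℝ) := by
        rw [hx i]
        calc (k : ℝ) * y i ≤ (k : ℝ) * 1 := mul_le_mul_of_nonneg_left (hy1 i).2 hk0
          _ = k := mul_one _
      exact ⟨by exact_mod_cast h1, by exact_mod_cast h2⟩
    · have : (x i : ℝ) ≤ (x j : ℝ) := by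
        rw [hx i, hx j]
        exact mul_le_mul_of_nonneg_left (hy2 i j hij) hk0
      exact_mod_cast this
  · rintro ⟨hb, hm⟩
    rcases Nat.eq_zero_or_pos k with hk | hk
    · subst hk
      refine ⟨fun _ => 0, ⟨fun i => ⟨le_refl _, zero_le_one⟩, fun i j _ => le_refl _⟩, ?_⟩
      funext i
      have : x i = 0 := le_antisymm (by exact_mod_cast (hb i).2) (hb i).1
      simp [this]
    · have hkR : (0 : ℝ) < (k : ℝ) := by exact_mod_cast hk
      refine ⟨fun i => (x i : ℝ) / k, ⟨fun i => ⟨?_, ?_⟩, fun i j hij => ?_⟩, ?_⟩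
      · exact div_nonneg (by exact_mod_cast (hb i).1) hkR.le
      · rw [div_le_one hkR]; exact_mod_cast (hb i).2
      · exact div_le_div_of_nonneg_right (by exact_mod_cast hm i j hij) hkR.le
      · funext i
        show (k : ℝ) * ((x i : ℝ) / k) = (x i : ℝ)
        field_simp

/-- The number of lattice points in the `k`-th dilate of the order polytope `O(α)`
equals the number of order-preserving maps `α → {1, …, k+1}`. -/
theorem stmt_2 (α : Type*) [PartialOrder α] [Fintype α] (k : ℕ) :
    Nat.card {x : α → ℤ // (fun i => (x i : ℝ)) ∈ (k : ℝ) • orderPoly α}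
      = Nat.card {f : α → Fin (k + 1) // Monotone f} := by
  refine Nat.card_congr ?_
  refine
    { toFun := fun x => ⟨fun i => ⟨(x.1 i).toNat, ?_⟩, ?_⟩
      invFun := fun f => ⟨fun i => ((f.1 i : ℕ) : ℤ), ?_⟩
      left_inv := ?_
      right_inv := ?_ }
  · have h := ((mem_smul_orderPoly α k x.1).mp x.2).1 i
    omega
  · intro i j hij
    have h := (mem_smul_orderPoly α k x.1).mp x.2
    have h1 := (h.1 i).1
    have h2 := h.2 i j hij
    exact Fin.mk_le_mk.mpr (by omega)
  · rw [mem_smul_orderPoly]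
    refine ⟨fun i => ⟨Int.ofNat_nonneg _, ?_⟩, fun i j hij => ?_⟩
    · exact_mod_cast Nat.lt_succ_iff.mp (f.1 i).2
    · exact_mod_cast f.2 hij
  · rintro ⟨x, hx⟩
    have h := ((mem_smul_orderPoly α k x).mp hx).1
    ext i
    simp only
    have := (h i).1
    omega
  · rintro ⟨f, hf⟩
    ext i
    simp
end

section
/- Let Π be a finite poset on d elements, and b ∈ int(cone(O(Π))) ∩ ℤ^{d+1}. Define a weighted directed graph Γ_b on the vertex set Π ∪ {−∞, +∞} with edges (i,j,−1) for each covering pair i ⋖ j in Π̂, and edges (j,i,+1) for each covering pair i ⋖ j with b_j − b_i = 1 (with the conventions b_{−∞}=0 and b_{+∞} = max_k b_k + 1). Then Γ_b contains no directed cycle of negative total weight. -/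
/-- A weighted edge of the digraph `Γ_b`: a down-weight `−1` edge along each covering
pair `x ⋖ y`, and an up-weight `+1` reversed edge along each covering pair `y ⋖ x`
which is sharp for `g`, i.e. `g x − g y = 1`. -/
def Gedge {V : Type*} [Preorder V] (g : V → ℤ) (x y : V) (w : ℤ) : Prop :=
  (w = -1 ∧ x ⋖ y) ∨ (w = 1 ∧ y ⋖ x ∧ g x - g y = 1)

lemma telescope_aux : ∀ (n : ℕ) (f : Fin (n+1) → ℤ),
    ∑ t : Fin n, (f t.castSucc - f t.succ) = f 0 - f (Fin.last n) := by
  intro n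
  induction n with
  | zero => simp
  | succ m ih =>
    intro f
    rw [Fin.sum_univ_castSucc]
    have := ih (f ∘ Fin.castSucc)
    simp only [Function.comp, Fin.castSucc_zero] at this
    have h3 : ∑ t : Fin m, (f t.castSucc.castSucc - f t.castSucc.succ)
        = f 0 - f (Fin.last m).castSucc := by
      rw [← this]
      apply Finset.sum_congr rfl
      intro t _
      rw [Fin.succ_castSucc]
    rw [h3, Fin.succ_last]
    ring


/-- Given an interior lattice point `b` of the cone over the order polytope
(equivalently: `0 < b i < h` and `b` strictly order-preserving), the weighted digraph
`Γ_b` on `Π ∪ {−∞, +∞}` (with `b_{−∞} = 0` and `b_{+∞} = max b + 1`) has no directed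
cycle of negative total weight. -/
theorem stmt_5 (α : Type*) [PartialOrder α] [Fintype α]
    (b : α → ℤ) (h : ℤ)
    (hb : ∀ i, 0 < b i ∧ b i < h) (hmono : ∀ i j : α, i < j → b i < b j) :
    ∀ (n : ℕ) (c : Fin (n + 1) → WithBot (WithTop α)) (w : Fin n → ℤ),
      (∀ t : Fin n,
        Gedge
          (WithBot.recBotCoe 0
            (WithTop.recTopCoe (((Finset.univ.sup fun i => (b i).toNat : ℕ) : ℤ) + 1)
              (fun a => b a)))
          (c t.castSucc) (c t.succ) (w t)) →
      c 0 = c (Fin.last n) → 0 ≤ ∑ t, w t := by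
  intro n c w hw hc
  set G : WithBot (WithTop α) → ℤ :=
    WithBot.recBotCoe 0
      (WithTop.recTopCoe (((Finset.univ.sup fun i => (b i).toNat : ℕ) : ℤ) + 1)
        (fun a => b a)) with hG
  have hsup : ∀ a : α, b a ≤ ((Finset.univ.sup fun i => (b i).toNat : ℕ) : ℤ) := by
    intro a
    have h1 : (b a).toNat ≤ Finset.univ.sup fun i => (b i).toNat :=
      Finset.le_sup (f := fun i => (b i).toNat) (Finset.mem_univ a)
    have h2 : 0 < b a := (hb a).1
    omega
  have hGmono : ∀ x y : WithBot (WithTop α), x < y → G x < G y := by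
    intro x y hxy
    induction x using WithBot.recBotCoe with
    | bot =>
      induction y using WithBot.recBotCoe with
      | bot => exact absurd hxy (lt_irrefl _)
      | coe y' =>
        induction y' using WithTop.recTopCoe with
        | top =>
          simp only [hG, WithBot.recBotCoe_bot, WithBot.recBotCoe_coe,
            WithTop.recTopCoe_top]
          positivity
        | coe a =>
          simp only [hG, WithBot.recBotCoe_bot, WithBot.recBotCoe_coe,
            WithTop.recTopCoe_coe]
          exact (hb a).1
    | coe x' =>
      induction y using WithBot.recBotCoe with
      | bot => exact absurd hxy (by simp)
      | coe y' =>
        have hxy' : x' < y' := WithBot.coe_lt_coe.mp hxy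
        induction x' using WithTop.recTopCoe with
        | top => exact absurd hxy' (not_top_lt)
        | coe a =>
          induction y' using WithTop.recTopCoe with
          | top =>
            simp only [hG, WithBot.recBotCoe_coe, WithTop.recTopCoe_top,
              WithTop.recTopCoe_coe]
            have := hsup a; omega
          | coe a' =>
            simp only [hG, WithBot.recBotCoe_coe, WithTop.recTopCoe_coe]
            exact hmono a a' (WithTop.coe_lt_coe.mp hxy')
  have key : ∀ t : Fin n, G (c t.castSucc) - G (c t.succ) ≤ w t := by
    intro t
    rcases hw t with ⟨hw1, hcov⟩ | ⟨hw1, hcov, heq⟩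
    · have := hGmono _ _ hcov.lt; omega
    · omega
  have hsum : ∑ t : Fin n, (G (c t.castSucc) - G (c t.succ)) ≤ ∑ t, w t :=
    Finset.sum_le_sum fun t _ => key t
  rw [telescope_aux n (fun i => G (c i)), hc] at hsum
  omega
end

section
/- Let Π be a finite poset with codeg(O(Π)) = r. The following are equivalent: (1) height(j) + depth(i) ≤ rank(Π̂) + 1 for all covering pairs j ⋗ i in Π; (2) for every covering pair j ⋗ i in Π there exists an interior lattice point x ∈ int(r·O(Π)) ∩ ℤ^Π with x_j = x_i + 1. -/
open scoped Pointwise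

/-- `height(i)`: the maximal length of a chain in `Π̂` descending from `i` to `−∞`;
it equals the maximal cardinality of a chain in `Π` with top element `i`. -/
noncomputable def heightP (α : Type*) [PartialOrder α] [Fintype α] (i : α) : ℕ :=
  sSup {n : ℕ | ∃ s : Finset α,
    IsChain (· ≤ ·) (s : Set α) ∧ i ∈ s ∧ (∀ x ∈ s, x ≤ i) ∧ s.card = n}

/-- `depth(i)`: the maximal length of a chain in `Π̂` ascending from `i` to `+∞`. -/
noncomputable def depthP (α : Type*) [PartialOrder α] [Fintype α] (i : α) : ℕ :=
  sSup {n : ℕ | ∃ s : Finset α,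
    IsChain (· ≤ ·) (s : Set α) ∧ i ∈ s ∧ (∀ x ∈ s, i ≤ x) ∧ s.card = n}

/-- The rank of `Π̂ = Π ∪ {−∞, +∞}`. -/
noncomputable def rankHat (α : Type*) [PartialOrder α] [Fintype α] : ℕ :=
  sSup {n : ℕ | ∃ s : Finset α, IsChain (· ≤ ·) (s : Set α) ∧ s.card = n} + 1

section Aux

variable {α : Type*} [PartialOrder α] [Fintype α]

/-! ### Characterization of membership and interior of `c • orderPoly α` -/

lemma mem_smul_orderPoly_s6 {c : ℝ} (hc : 0 < c) {x : α → ℝ} :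
    x ∈ c • orderPoly α ↔ (∀ k, 0 ≤ x k ∧ x k ≤ c) ∧ ∀ k l : α, k ≤ l → x k ≤ x l := by
  rw [Set.mem_smul_set_iff_inv_smul_mem₀ hc.ne']
  have hinv : 0 < c⁻¹ := inv_pos.2 hc
  have key0 : ∀ y : ℝ, 0 ≤ c⁻¹ * y ↔ 0 ≤ y := by
    intro y; rw [inv_mul_eq_div, le_div_iff₀ hc]; simp
  have key1 : ∀ y : ℝ, c⁻¹ * y ≤ 1 ↔ y ≤ c := by
    intro y; rw [inv_mul_eq_div, div_le_one hc]
  have keym : ∀ y z : ℝ, c⁻¹ * y ≤ c⁻¹ * z ↔ y ≤ z := by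
    intro y z; rw [inv_mul_eq_div, inv_mul_eq_div, div_le_div_iff_of_pos_right hc]
  simp only [orderPoly, Set.mem_setOf_eq, Pi.smul_apply, smul_eq_mul]
  constructor
  · rintro ⟨h1, h2⟩
    exact ⟨fun k => ⟨(key0 _).1 (h1 k).1, (key1 _).1 (h1 k).2⟩,
      fun k l hkl => (keym _ _).1 (h2 k l hkl)⟩
  · rintro ⟨h1, h2⟩
    exact ⟨fun k => ⟨(key0 _).2 (h1 k).1, (key1 _).2 (h1 k).2⟩,
      fun k l hkl => (keym _ _).2 (h2 k l hkl)⟩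

lemma isOpen_strict (c : ℝ) :
    IsOpen {x : α → ℝ | (∀ k, 0 < x k ∧ x k < c) ∧ ∀ k l : α, k < l → x k < x l} := by
  have heq : {x : α → ℝ | (∀ k, 0 < x k ∧ x k < c) ∧ ∀ k l : α, k < l → x k < x l}
      = (⋂ k, {x : α → ℝ | 0 < x k} ∩ {x | x k < c}) ∩
        ⋂ k, ⋂ l, {x : α → ℝ | k < l → x k < x l} := by
    ext x
    simp [Set.mem_iInter, Set.mem_setOf_eq, forall_and]
  rw [heq]
  refine IsOpen.inter (isOpen_iInter_of_finite fun k => IsOpen.inter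
      (isOpen_lt continuous_const (continuous_apply k))
      (isOpen_lt (continuous_apply k) continuous_const))
    (isOpen_iInter_of_finite fun k => isOpen_iInter_of_finite fun l => ?_)
  by_cases h : k < l
  · have : {x : α → ℝ | k < l → x k < x l} = {x : α → ℝ | x k < x l} := by
      ext x; simp [h]
    rw [this]
    exact isOpen_lt (continuous_apply k) (continuous_apply l)
  · have : {x : α → ℝ | k < l → x k < x l} = Set.univ := by
      ext x; simp [h]
    rw [this]; exact isOpen_univ

lemma interior_smul_orderPoly {c : ℝ} (hc : 0 < c) :
    interior (c • orderPoly α) =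
      {x : α → ℝ | (∀ k, 0 < x k ∧ x k < c) ∧ ∀ k l : α, k < l → x k < x l} := by
  apply Set.Subset.antisymm
  · intro x hx
    have hmem := interior_subset hx
    rw [mem_smul_orderPoly_s6 hc] at hmem
    classical
    rw [mem_interior_iff_mem_nhds, Metric.mem_nhds_iff] at hx
    obtain ⟨ε, hε, hball⟩ := hx
    have key : ∀ (k : α) (a : ℝ), |a - x k| < ε → Function.update x k a ∈ c • orderPoly α := by
      intro k a ha
      apply hball
      rw [Metric.mem_ball, dist_pi_lt_iff hε]
      intro b
      rcases eq_or_ne b k with rfl | hb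
      · simpa [Real.dist_eq] using ha
      · simp [Function.update_of_ne hb, hε]
    have habs : |ε/2| < ε := by rw [abs_of_pos (by linarith)]; linarith
    refine ⟨fun k => ⟨?_, ?_⟩, fun k l hkl => ?_⟩
    · by_contra h
      push_neg at h
      have h2 := key k (x k - ε/2) (by simpa using habs)
      rw [mem_smul_orderPoly_s6 hc] at h2
      have := (h2.1 k).1
      rw [Function.update_self] at this
      linarith
    · by_contra h
      push_neg at h
      have h2 := key k (x k + ε/2) (by simpa using habs)
      rw [mem_smul_orderPoly_s6 hc] at h2
      have := (h2.1 k).2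
      rw [Function.update_self] at this
      linarith
    · by_contra h
      push_neg at h
      have h2 := key k (x k + ε/2) (by simpa using habs)
      rw [mem_smul_orderPoly_s6 hc] at h2
      have := h2.2 k l hkl.le
      rw [Function.update_self, Function.update_of_ne hkl.ne'] at this
      linarith
  · apply interior_maximal _ (isOpen_strict c)
    intro x hx
    rw [mem_smul_orderPoly_s6 hc]
    refine ⟨fun k => ⟨(hx.1 k).1.le, (hx.1 k).2.le⟩, fun k l hkl => ?_⟩
    rcases eq_or_lt_of_le hkl with rfl | h
    · exact le_rfl
    · exact (hx.2 _ _ h).le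

lemma lattice_interior_iff {c : ℕ} (hc : 0 < c) (z : α → ℤ) :
    (fun i => (z i : ℝ)) ∈ interior ((c : ℝ) • orderPoly α) ↔
      (∀ k, 1 ≤ z k ∧ z k ≤ (c : ℤ) - 1) ∧ ∀ k l : α, k < l → z k < z l := by
  rw [interior_smul_orderPoly (by exact_mod_cast hc)]
  simp only [Set.mem_setOf_eq]
  constructor
  · rintro ⟨h1, h2⟩
    refine ⟨fun k => ?_, fun k l hkl => ?_⟩
    · obtain ⟨ha, hb⟩ := h1 k
      have ha' : (0 : ℤ) < z k := by exact_mod_cast ha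
      have hb' : z k < (c : ℤ) := by exact_mod_cast hb
      omega
    · exact_mod_cast h2 k l hkl
  · rintro ⟨h1, h2⟩
    refine ⟨fun k => ?_, fun k l hkl => ?_⟩
    · obtain ⟨ha, hb⟩ := h1 k
      constructor
      · exact_mod_cast lt_of_lt_of_le (by norm_num) ha
      · exact_mod_cast lt_of_le_of_lt hb (by omega)
    · exact_mod_cast h2 k l hkl

/-! ### Chain combinatorics -/

/-- the maximal cardinality of a chain in `α` -/
noncomputable def maxC (α : Type*) [PartialOrder α] [Fintype α] : ℕ :=
  sSup {n : ℕ | ∃ s : Finset α, IsChain (· ≤ ·) (s : Set α) ∧ s.card = n}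

lemma rankHat_eq : rankHat α = maxC α + 1 := rfl

lemma bddH (i : α) : BddAbove {n : ℕ | ∃ s : Finset α,
    IsChain (· ≤ ·) (s : Set α) ∧ i ∈ s ∧ (∀ x ∈ s, x ≤ i) ∧ s.card = n} := by
  refine ⟨Fintype.card α, fun n hn => ?_⟩
  obtain ⟨s, _, _, _, rfl⟩ := hn
  exact s.card_le_univ

lemma bddD (i : α) : BddAbove {n : ℕ | ∃ s : Finset α,
    IsChain (· ≤ ·) (s : Set α) ∧ i ∈ s ∧ (∀ x ∈ s, i ≤ x) ∧ s.card = n} := by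
  refine ⟨Fintype.card α, fun n hn => ?_⟩
  obtain ⟨s, _, _, _, rfl⟩ := hn
  exact s.card_le_univ

lemma bddC : BddAbove {n : ℕ | ∃ s : Finset α,
    IsChain (· ≤ ·) (s : Set α) ∧ s.card = n} := by
  refine ⟨Fintype.card α, fun n hn => ?_⟩
  obtain ⟨s, _, rfl⟩ := hn
  exact s.card_le_univ

lemma heightP_exists (i : α) : ∃ s : Finset α, IsChain (· ≤ ·) (s : Set α) ∧ i ∈ s ∧
    (∀ x ∈ s, x ≤ i) ∧ s.card = heightP α i := by
  apply Nat.sSup_mem _ (bddH i)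
  exact ⟨1, {i}, by simp [Set.subsingleton_singleton.isChain]⟩

lemma depthP_exists (i : α) : ∃ s : Finset α, IsChain (· ≤ ·) (s : Set α) ∧ i ∈ s ∧
    (∀ x ∈ s, i ≤ x) ∧ s.card = depthP α i := by
  apply Nat.sSup_mem _ (bddD i)
  exact ⟨1, {i}, by simp [Set.subsingleton_singleton.isChain]⟩

lemma one_le_heightP (i : α) : 1 ≤ heightP α i :=
  le_csSup (bddH i) ⟨{i}, by simp [Set.subsingleton_singleton.isChain]⟩

lemma one_le_depthP (i : α) : 1 ≤ depthP α i :=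
  le_csSup (bddD i) ⟨{i}, by simp [Set.subsingleton_singleton.isChain]⟩

lemma heightP_strictMono {k l : α} (h : k < l) : heightP α k < heightP α l := by
  classical
  obtain ⟨s, hs, hks, hsle, hcard⟩ := heightP_exists (α := α) k
  have hlns : l ∉ s := fun hls => h.not_ge (hsle l hls)
  have : heightP α k + 1 ≤ heightP α l := by
    apply le_csSup (bddH l)
    refine ⟨insert l s, ?_, Finset.mem_insert_self _ _, ?_, ?_⟩
    · rw [Finset.coe_insert]
      apply hs.insert
      intro b hb _
      exact Or.inr ((hsle b hb).trans h.le)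
    · intro a ha
      rcases Finset.mem_insert.1 ha with rfl | ha
      · exact le_rfl
      · exact (hsle a ha).trans h.le
    · rw [Finset.card_insert_of_notMem hlns, hcard]
  omega

/-- union of a chain below k and a chain above k -/
lemma chain_union [DecidableEq α] {s t : Finset α} (hs : IsChain (· ≤ ·) (s : Set α))
    (ht : IsChain (· ≤ ·) (t : Set α)) (k : α) (hks : k ∈ s) (hkt : k ∈ t)
    (hsle : ∀ a ∈ s, a ≤ k) (htle : ∀ a ∈ t, k ≤ a) :
    IsChain (· ≤ ·) ((s ∪ t : Finset α) : Set α) ∧ (s ∪ t).card + 1 = s.card + t.card := by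
  constructor
  · intro a ha b hb hab
    rw [Finset.mem_coe, Finset.mem_union] at ha hb
    rcases ha with ha | ha <;> rcases hb with hb | hb
    · exact hs ha hb hab
    · exact Or.inl ((hsle a ha).trans (htle b hb))
    · exact Or.inr ((hsle b hb).trans (htle a ha))
    · exact ht ha hb hab
  · have hint : s ∩ t = {k} := by
      ext a
      simp only [Finset.mem_inter, Finset.mem_singleton]
      constructor
      · rintro ⟨h1, h2⟩
        exact le_antisymm (hsle a h1) (htle a h2)
      · rintro rfl
        exact ⟨hks, hkt⟩
    have := Finset.card_union_add_card_inter s t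
    rw [hint] at this
    simpa using this

lemma heightP_le_maxC (i : α) : heightP α i ≤ maxC α := by
  have h1 : (1:ℕ) ∈ {n : ℕ | ∃ s : Finset α,
      IsChain (· ≤ ·) (s : Set α) ∧ i ∈ s ∧ (∀ x ∈ s, x ≤ i) ∧ s.card = n} :=
    ⟨{i}, by simp [Set.subsingleton_singleton.isChain]⟩
  apply csSup_le ⟨1, h1⟩
  rintro n ⟨s, h1, _, _, h4⟩
  exact le_csSup bddC ⟨s, h1, h4⟩

lemma heightP_add_depthP_le (k : α) : heightP α k + depthP α k ≤ maxC α + 1 := by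
  classical
  obtain ⟨s, hs, hks, hsle, hscard⟩ := heightP_exists (α := α) k
  obtain ⟨t, ht, hkt, htle, htcard⟩ := depthP_exists (α := α) k
  obtain ⟨hchain, hcard⟩ := chain_union hs ht k hks hkt hsle htle
  have : (s ∪ t).card ≤ maxC α := le_csSup bddC ⟨s ∪ t, hchain, rfl⟩
  omega

/-- integer strictly monotone functions bound chain cardinality -/
lemma chain_card_le {s : Finset α} (hs : IsChain (· ≤ ·) (s : Set α)) (z : α → ℤ)
    (hm : ∀ k l : α, k < l → z k < z l) {a b : ℤ} (hab : a ≤ b + 1)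
    (hb : ∀ k ∈ s, z k ∈ Finset.Icc a b) : (s.card : ℤ) ≤ b - a + 1 := by
  have hinj : Set.InjOn z s := by
    intro k hk l hl heq
    by_contra hne
    rcases hs hk hl hne with h | h
    · exact absurd heq (hm k l (lt_of_le_of_ne h hne)).ne
    · exact absurd heq.symm (hm l k (lt_of_le_of_ne h (Ne.symm hne))).ne
  have := Finset.card_le_card_of_injOn z hb hinj
  rw [Int.card_Icc] at this
  have h2 : ((b + 1 - a).toNat : ℤ) = b + 1 - a := Int.toNat_of_nonneg (by omega)
  calc (s.card : ℤ) ≤ ((b + 1 - a).toNat : ℤ) := by exact_mod_cast this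
    _ = b + 1 - a := h2
    _ ≤ b - a + 1 := by omega

/-! ### The auxiliary quantity `upD i k`: maximal cardinality of a chain from `i` to `k` -/

noncomputable def upD (α : Type*) [PartialOrder α] [Fintype α] (i k : α) : ℕ :=
  sSup {n : ℕ | ∃ s : Finset α, IsChain (· ≤ ·) (s : Set α) ∧ i ∈ s ∧ k ∈ s ∧
    (∀ a ∈ s, i ≤ a ∧ a ≤ k) ∧ s.card = n}

lemma bddU (i k : α) : BddAbove {n : ℕ | ∃ s : Finset α,
    IsChain (· ≤ ·) (s : Set α) ∧ i ∈ s ∧ k ∈ s ∧ (∀ a ∈ s, i ≤ a ∧ a ≤ k) ∧ s.card = n} := by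
  refine ⟨Fintype.card α, fun n hn => ?_⟩
  obtain ⟨s, _, _, _, _, rfl⟩ := hn
  exact s.card_le_univ

lemma pair_mem_upD [DecidableEq α] {i k : α} (hik : i ≤ k) :
    ({i, k} : Finset α).card ∈ {n : ℕ | ∃ s : Finset α, IsChain (· ≤ ·) (s : Set α) ∧
      i ∈ s ∧ k ∈ s ∧ (∀ a ∈ s, i ≤ a ∧ a ≤ k) ∧ s.card = n} := by
  refine ⟨{i, k}, ?_, by simp, by simp, ?_, rfl⟩
  · intro a ha b hb hab
    simp only [Finset.coe_insert, Set.mem_insert_iff, Finset.coe_singleton,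
      Set.mem_singleton_iff] at ha hb
    rcases ha with rfl | rfl <;> rcases hb with rfl | rfl <;>
      first | exact Or.inl le_rfl | exact Or.inl hik | exact Or.inr hik
  · intro a ha
    rcases Finset.mem_insert.1 ha with rfl | ha
    · exact ⟨le_rfl, hik⟩
    · rw [Finset.mem_singleton] at ha
      subst ha
      exact ⟨hik, le_rfl⟩

lemma upD_exists {i k : α} (hik : i ≤ k) : ∃ s : Finset α, IsChain (· ≤ ·) (s : Set α) ∧
    i ∈ s ∧ k ∈ s ∧ (∀ a ∈ s, i ≤ a ∧ a ≤ k) ∧ s.card = upD α i k := by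
  classical
  exact Nat.sSup_mem ⟨_, pair_mem_upD hik⟩ (bddU i k)

lemma upD_self (i : α) : upD α i i = 1 := by
  classical
  apply le_antisymm
  · apply csSup_le ⟨_, pair_mem_upD le_rfl⟩
    rintro n ⟨s, hs, his, _, hbet, rfl⟩
    have : s = {i} := by
      apply Finset.eq_singleton_iff_unique_mem.2
      exact ⟨his, fun a ha => le_antisymm (hbet a ha).2 (hbet a ha).1⟩
    simp [this]
  · have h1 : ({i, i} : Finset α).card = 1 := by simp
    have := pair_mem_upD (le_refl i)
    rw [h1] at this
    exact le_csSup (bddU i i) this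

lemma upD_cover {i j : α} (hij : i ⋖ j) : upD α i j = 2 := by
  classical
  apply le_antisymm
  · apply csSup_le ⟨_, pair_mem_upD hij.1.le⟩
    rintro n ⟨s, hs, his, hjs, hbet, rfl⟩
    have hsub : s ⊆ {i, j} := by
      intro a ha
      obtain ⟨h1, h2⟩ := hbet a ha
      rcases eq_or_lt_of_le h1 with rfl | h1
      · simp
      · rcases eq_or_lt_of_le h2 with rfl | h2
        · simp
        · exact absurd h2 (hij.2 h1)
    calc s.card ≤ ({i, j} : Finset α).card := Finset.card_le_card hsub
      _ ≤ 2 := Finset.card_insert_le _ _ |>.trans (by simp)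
  · have h2 : ({i, j} : Finset α).card = 2 := Finset.card_pair hij.1.ne
    have := pair_mem_upD hij.1.le
    rw [h2] at this
    exact le_csSup (bddU i j) this

lemma upD_strictMono {i k l : α} (hik : i ≤ k) (hkl : k < l) : upD α i k < upD α i l := by
  classical
  obtain ⟨s, hs, his, hks, hbet, hcard⟩ := upD_exists hik
  have hlns : l ∉ s := fun hls => hkl.not_ge (hbet l hls).2
  have : upD α i k + 1 ≤ upD α i l := by
    apply le_csSup (bddU i l)
    refine ⟨insert l s, ?_, Finset.mem_insert_of_mem his, Finset.mem_insert_self _ _, ?_, ?_⟩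
    · rw [Finset.coe_insert]
      apply hs.insert
      intro b hb _
      exact Or.inr ((hbet b hb).2.trans hkl.le)
    · intro a ha
      rcases Finset.mem_insert.1 ha with rfl | ha
      · exact ⟨hik.trans hkl.le, le_rfl⟩
      · exact ⟨(hbet a ha).1, (hbet a ha).2.trans hkl.le⟩
    · rw [Finset.card_insert_of_notMem hlns, hcard]
  omega

lemma upD_add_depth {i k : α} (hik : i ≤ k) :
    upD α i k + depthP α k ≤ depthP α i + 1 := by
  classical
  obtain ⟨s, hs, his, hks, hbet, hscard⟩ := upD_exists hik
  obtain ⟨t, ht, hkt, htle, htcard⟩ := depthP_exists (α := α) k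
  obtain ⟨hchain, hcard⟩ := chain_union hs ht k hks hkt (fun a ha => (hbet a ha).2) htle
  have hmem : (s ∪ t).card ≤ depthP α i := by
    apply le_csSup (bddD i)
    refine ⟨s ∪ t, hchain, Finset.mem_union_left _ his, ?_, rfl⟩
    intro a ha
    rcases Finset.mem_union.1 ha with ha | ha
    · exact (hbet a ha).1
    · exact hik.trans (htle a ha)
  omega

end Aux

/-- For a finite poset with `codeg(O(Π)) = r`, the following are equivalent:
(1) `height(j) + depth(i) ≤ rank(Π̂) + 1` for all covering pairs `i ⋖ j`;
(2) for every covering pair `i ⋖ j` there is an interior lattice point `x` of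
`r · O(Π)` with `x j = x i + 1`. -/
theorem stmt_6 (α : Type*) [PartialOrder α] [Fintype α] (r : ℕ)
    (hr : IsLeast {c : ℕ | 0 < c ∧
        ∃ z : α → ℤ, (fun i => (z i : ℝ)) ∈ interior ((c : ℝ) • orderPoly α)} r) :
    (∀ i j : α, i ⋖ j → heightP α j + depthP α i ≤ rankHat α + 1)
      ↔ (∀ i j : α, i ⋖ j →
          ∃ x : α → ℤ, (fun i => (x i : ℝ)) ∈ interior ((r : ℝ) • orderPoly α) ∧
            x j = x i + 1) := by
  classical
  have hrpos : 0 < r := hr.1.1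
  have hLr : r = maxC α + 1 := by
    apply le_antisymm
    · apply hr.2
      refine ⟨Nat.succ_pos _, fun k => (heightP α k : ℤ), ?_⟩
      rw [lattice_interior_iff (Nat.succ_pos _)]
      refine ⟨fun k => ⟨by exact_mod_cast one_le_heightP k, ?_⟩,
        fun k l hkl => by exact_mod_cast heightP_strictMono hkl⟩
      have := heightP_le_maxC (α := α) k
      push_cast
      omega
    · obtain ⟨hpos, z, hz⟩ := hr.1
      rw [lattice_interior_iff hpos] at hz
      have hbound : maxC α ≤ r - 1 := by
        have hemp : (0:ℕ) ∈ {n : ℕ | ∃ s : Finset α,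
            IsChain (· ≤ ·) (s : Set α) ∧ s.card = n} :=
          ⟨∅, by simp⟩
        apply csSup_le ⟨0, hemp⟩
        rintro n ⟨s, hs, rfl⟩
        have := chain_card_le hs z hz.2 (a := 1) (b := (r:ℤ) - 1) (by omega)
          (fun k hk => Finset.mem_Icc.2 ⟨(hz.1 k).1, (hz.1 k).2⟩)
        omega
      omega
  constructor
  · intro H i j hij
    have hH : heightP α j + depthP α i ≤ maxC α + 2 := by
      have := H i j hij
      rw [rankHat_eq] at this
      omega
    set v : ℤ := (heightP α j : ℤ) with hv
    set x : α → ℤ := fun k =>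
      if i ≤ k then max ((heightP α k : ℤ)) (v - 2 + (upD α i k : ℤ))
      else (heightP α k : ℤ) with hxdef
    have h1 : ∀ k, (heightP α k : ℤ) ≤ x k := by
      intro k
      by_cases h : i ≤ k <;> simp [hxdef, h, le_max_left]
    have hmono : ∀ k l : α, k < l → x k < x l := by
      intro k l hkl
      by_cases hk : i ≤ k
      · have hl : i ≤ l := hk.trans hkl.le
        simp only [hxdef, if_pos hk, if_pos hl]
        refine max_lt_max (by exact_mod_cast heightP_strictMono hkl) ?_
        have := upD_strictMono hk hkl
        omega
      · by_cases hl : i ≤ l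
        · simp only [hxdef, if_neg hk, if_pos hl]
          exact lt_of_lt_of_le (by exact_mod_cast heightP_strictMono hkl) (le_max_left _ _)
        · simp only [hxdef, if_neg hk, if_neg hl]
          exact_mod_cast heightP_strictMono hkl
    have hlow : ∀ k, 1 ≤ x k := by
      intro k
      have := one_le_heightP (α := α) k
      have := h1 k
      omega
    have hup : ∀ k, x k ≤ (r : ℤ) - 1 := by
      intro k
      have hhd := heightP_add_depthP_le (α := α) k
      have hd1 := one_le_depthP (α := α) k
      by_cases h : i ≤ k
      · simp only [hxdef, if_pos h]
        apply max_le
        · omega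
        · have hud := upD_add_depth (α := α) h
          omega
      · simp only [hxdef, if_neg h]
        omega
    have hii : x i = v - 1 := by
      have hlt : (heightP α i : ℤ) ≤ v - 1 := by
        have := heightP_strictMono (α := α) hij.1
        omega
      simp only [hxdef, if_pos (le_refl i), upD_self]
      push_cast
      rw [max_eq_right (by omega)]
      ring
    have hjj : x j = v := by
      simp only [hxdef, if_pos hij.1.le, upD_cover hij]
      push_cast
      rw [← hv]
      have hveq : v - 2 + 2 = v := by ring
      rw [hveq, max_self]
    refine ⟨x, ?_, by rw [hjj, hii]; ring⟩
    rw [lattice_interior_iff hrpos]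
    exact ⟨fun k => ⟨hlow k, hup k⟩, hmono⟩
  · intro H i j hij
    obtain ⟨x, hx, hxj⟩ := H i j hij
    rw [lattice_interior_iff hrpos] at hx
    obtain ⟨s, hs, hjs, hsle, hscard⟩ := heightP_exists (α := α) j
    have h1 : (heightP α j : ℤ) ≤ x j := by
      have hc := chain_card_le hs x hx.2 (a := 1) (b := x j)
        (by have := (hx.1 j).1; omega) ?_
      · rw [hscard] at hc
        omega
      · intro k hk
        rw [Finset.mem_Icc]
        refine ⟨(hx.1 k).1, ?_⟩
        rcases eq_or_lt_of_le (hsle k hk) with rfl | h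
        · exact le_rfl
        · exact (hx.2 _ _ h).le
    obtain ⟨t, ht, hit, htle, htcard⟩ := depthP_exists (α := α) i
    have h2 : (depthP α i : ℤ) ≤ (r : ℤ) - x i := by
      have hc := chain_card_le ht x hx.2 (a := x i) (b := (r:ℤ) - 1)
        (by have := (hx.1 i).2; omega) ?_
      · rw [htcard] at hc
        omega
      · intro k hk
        rw [Finset.mem_Icc]
        refine ⟨?_, (hx.1 k).2⟩
        rcases eq_or_lt_of_le (htle k hk) with rfl | h
        · exact le_rfl
        · exact (hx.2 _ _ h).le
    rw [rankHat_eq]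
    omega
end

section
/- The chain polytope of an ordinal sum Π₁ ◁ Π₂ of two finite posets is the free sum of the chain polytopes: C(Π₁ ◁ Π₂) = conv( (C(Π₁) × {0}) ∪ ({0} × C(Π₂)) ). -/
open Finset

instance (α β : Type*) [Fintype α] [Fintype β] : Fintype (α ⊕ₗ β) :=
  inferInstanceAs (Fintype (α ⊕ β))

private lemma sum_disjSum' {α β M : Type*} [AddCommMonoid M] (s : Finset α) (t : Finset β)
    (k : α ⊕ β → M) :
    ∑ x ∈ s.disjSum t, k x = ∑ a ∈ s, k (Sum.inl a) + ∑ b ∈ t, k (Sum.inr b) := by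
  classical
  have h : s.disjSum t = s.map Function.Embedding.inl ∪ t.map Function.Embedding.inr := by
    ext x; cases x <;> simp
  rw [h, Finset.sum_union, Finset.sum_map, Finset.sum_map]
  · rfl
  · simp [Finset.disjoint_left]

private lemma zero_mem_chainPoly (α : Type*) [PartialOrder α] [Fintype α] :
    (0 : α → ℝ) ∈ chainPoly α := by
  refine ⟨fun i => le_refl 0, fun s _ => by simp⟩

private lemma chainPoly_convex (α : Type*) [PartialOrder α] [Fintype α] :
    Convex ℝ (chainPoly α) := by
  intro x hx y hy a b ha hb hab
  obtain ⟨hx0, hxc⟩ := hx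
  obtain ⟨hy0, hyc⟩ := hy
  constructor
  · intro i
    have := add_nonneg (mul_nonneg ha (hx0 i)) (mul_nonneg hb (hy0 i))
    simpa [smul_eq_mul] using this
  · intro s hs
    have : ∑ i ∈ s, (a • x + b • y) i = a * ∑ i ∈ s, x i + b * ∑ i ∈ s, y i := by
      simp [Finset.mul_sum, Finset.sum_add_distrib, smul_eq_mul]
    rw [this]
    calc a * ∑ i ∈ s, x i + b * ∑ i ∈ s, y i
        ≤ a * 1 + b * 1 := by
          gcongr
          · exact hxc s hs
          · exact hyc s hs
      _ = 1 := by rw [mul_one, mul_one, hab]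

private lemma toLeft_chain {α β : Type*} [PartialOrder α] [PartialOrder β]
    {s : Finset (α ⊕ₗ β)} (hs : IsChain (· ≤ ·) (s : Set (α ⊕ₗ β))) :
    IsChain (· ≤ ·) (((s.map (ofLex (α := α ⊕ β)).toEmbedding).toLeft : Finset α) : Set α) := by
  intro a ha b hb hab
  have ha' : toLex (Sum.inl a : α ⊕ β) ∈ s := by
    have := Finset.mem_toLeft.mp ha
    rw [Finset.mem_map] at this
    obtain ⟨x, hx, hxe⟩ := this
    have : x = toLex (Sum.inl a) := by apply_fun toLex at hxe; simpa using hxe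
    rwa [← this]
  have hb' : toLex (Sum.inl b : α ⊕ β) ∈ s := by
    have := Finset.mem_toLeft.mp hb
    rw [Finset.mem_map] at this
    obtain ⟨x, hx, hxe⟩ := this
    have : x = toLex (Sum.inl b) := by apply_fun toLex at hxe; simpa using hxe
    rwa [← this]
  have hne : (toLex (Sum.inl a : α ⊕ β)) ≠ toLex (Sum.inl b) := by simp [hab]
  rcases hs ha' hb' hne with h | h
  · exact Or.inl (Sum.Lex.inl_le_inl_iff.mp h)
  · exact Or.inr (Sum.Lex.inl_le_inl_iff.mp h)

private lemma toRight_chain {α β : Type*} [PartialOrder α] [PartialOrder β]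
    {s : Finset (α ⊕ₗ β)} (hs : IsChain (· ≤ ·) (s : Set (α ⊕ₗ β))) :
    IsChain (· ≤ ·) (((s.map (ofLex (α := α ⊕ β)).toEmbedding).toRight : Finset β) : Set β) := by
  intro a ha b hb hab
  have ha' : toLex (Sum.inr a : α ⊕ β) ∈ s := by
    have := Finset.mem_toRight.mp ha
    rw [Finset.mem_map] at this
    obtain ⟨x, hx, hxe⟩ := this
    have : x = toLex (Sum.inr a) := by apply_fun toLex at hxe; simpa using hxe
    rwa [← this]
  have hb' : toLex (Sum.inr b : α ⊕ β) ∈ s := by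
    have := Finset.mem_toRight.mp hb
    rw [Finset.mem_map] at this
    obtain ⟨x, hx, hxe⟩ := this
    have : x = toLex (Sum.inr b) := by apply_fun toLex at hxe; simpa using hxe
    rwa [← this]
  have hne : (toLex (Sum.inr a : α ⊕ β)) ≠ toLex (Sum.inr b) := by simp [hab]
  rcases hs ha' hb' hne with h | h
  · exact Or.inl (Sum.Lex.inr_le_inr_iff.mp h)
  · exact Or.inr (Sum.Lex.inr_le_inr_iff.mp h)

private lemma sum_over_lex {α β : Type*} [PartialOrder α] [Fintype α] [PartialOrder β]
    [Fintype β] (s : Finset (α ⊕ₗ β)) (g : α ⊕ₗ β → ℝ) :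
    ∑ i ∈ s, g i
      = ∑ a ∈ (s.map (ofLex (α := α ⊕ β)).toEmbedding).toLeft, g (toLex (Sum.inl a))
        + ∑ b ∈ (s.map (ofLex (α := α ⊕ β)).toEmbedding).toRight, g (toLex (Sum.inr b)) := by
  classical
  have h1 : ∑ i ∈ s, g i = ∑ x ∈ s.map (ofLex (α := α ⊕ β)).toEmbedding, g (toLex x) := by
    rw [Finset.sum_map]; rfl
  rw [h1, ← Finset.toLeft_disjSum_toRight (u := s.map (ofLex (α := α ⊕ β)).toEmbedding),
    sum_disjSum']
  simp

private lemma left_mem {α β : Type*} [PartialOrder α] [Fintype α] [PartialOrder β] [Fintype β]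
    {f : α → ℝ} (hf : f ∈ chainPoly α) :
    (fun i : α ⊕ₗ β => Sum.elim f (0 : β → ℝ) (ofLex i)) ∈ chainPoly (α ⊕ₗ β) := by
  classical
  obtain ⟨hf0, hfc⟩ := hf
  constructor
  · intro i
    rcases h : ofLex i with a | b
    · simp [h, hf0 a]
    · simp [h]
  · intro s hs
    rw [sum_over_lex s]
    simp only [ofLex_toLex, Sum.elim_inl, Sum.elim_inr, Pi.zero_apply, Finset.sum_const_zero,
      add_zero]
    exact hfc _ (toLeft_chain hs)

private lemma right_mem {α β : Type*} [PartialOrder α] [Fintype α] [PartialOrder β] [Fintype β]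
    {f : β → ℝ} (hf : f ∈ chainPoly β) :
    (fun i : α ⊕ₗ β => Sum.elim (0 : α → ℝ) f (ofLex i)) ∈ chainPoly (α ⊕ₗ β) := by
  classical
  obtain ⟨hf0, hfc⟩ := hf
  constructor
  · intro i
    rcases h : ofLex i with a | b
    · simp [h]
    · simp [h, hf0 b]
  · intro s hs
    rw [sum_over_lex s]
    simp only [ofLex_toLex, Sum.elim_inl, Sum.elim_inr, Pi.zero_apply, Finset.sum_const_zero,
      zero_add]
    exact hfc _ (toRight_chain hs)

/-- union of a chain in α and a chain in β gives a chain in the lex sum -/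
private lemma disjSum_chain {α β : Type*} [PartialOrder α] [PartialOrder β]
    {s₁ : Finset α} {s₂ : Finset β} (h₁ : IsChain (· ≤ ·) (s₁ : Set α))
    (h₂ : IsChain (· ≤ ·) (s₂ : Set β)) :
    IsChain (· ≤ ·)
      (((s₁.disjSum s₂).map (toLex (α := α ⊕ β)).toEmbedding : Finset (α ⊕ₗ β)) : Set (α ⊕ₗ β)) := by
  intro x hx y hy hxy
  rw [Finset.coe_map, Set.mem_image] at hx hy
  obtain ⟨u, hu, rfl⟩ := hx
  obtain ⟨v, hv, rfl⟩ := hy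
  rw [Finset.mem_coe, Finset.mem_disjSum] at hu hv
  rcases hu with ⟨a, ha, rfl⟩ | ⟨b, hb, rfl⟩ <;> rcases hv with ⟨a', ha', rfl⟩ | ⟨b', hb', rfl⟩
  · have hne : a ≠ a' := fun h => hxy (by simp [h])
    rcases h₁ ha ha' hne with h | h
    · exact Or.inl (Sum.Lex.inl_le_inl_iff.mpr h)
    · exact Or.inr (Sum.Lex.inl_le_inl_iff.mpr h)
  · exact Or.inl (Sum.Lex.inl_le_inr _ _)
  · exact Or.inr (Sum.Lex.inl_le_inr _ _)
  · have hne : b ≠ b' := fun h => hxy (by simp [h])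
    rcases h₂ hb hb' hne with h | h
    · exact Or.inl (Sum.Lex.inr_le_inr_iff.mpr h)
    · exact Or.inr (Sum.Lex.inr_le_inr_iff.mpr h)

/-- The chain polytope of an ordinal sum `Π₁ ◁ Π₂` is the free sum of the chain
polytopes: the convex hull of `C(Π₁) × {0}` together with `{0} × C(Π₂)`. -/
theorem stmt_7 (α β : Type*) [PartialOrder α] [Fintype α] [PartialOrder β] [Fintype β] :
    chainPoly (α ⊕ₗ β)
      = convexHull ℝ
          (((fun f => fun i : α ⊕ₗ β => Sum.elim f (0 : β → ℝ) (ofLex i)) '' chainPoly α) ∪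
           ((fun g => fun i : α ⊕ₗ β => Sum.elim (0 : α → ℝ) g (ofLex i)) '' chainPoly β)) := by
  classical
  apply Set.Subset.antisymm
  · -- hard direction
    intro g hg
    obtain ⟨hg0, hgc⟩ := hg
    set f : α → ℝ := fun a => g (toLex (Sum.inl a)) with hfdef
    set h : β → ℝ := fun b => g (toLex (Sum.inr b)) with hhdef
    set 𝒞a : Finset (Finset α) :=
      Finset.univ.filter (fun s => IsChain (· ≤ ·) (s : Set α)) with h𝒞a
    set 𝒞b : Finset (Finset β) :=
      Finset.univ.filter (fun s => IsChain (· ≤ ·) (s : Set β)) with h𝒞b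
    have hane : 𝒞a.Nonempty := ⟨∅, by simp [h𝒞a]⟩
    have hbne : 𝒞b.Nonempty := ⟨∅, by simp [h𝒞b]⟩
    set M₁ : ℝ := 𝒞a.sup' hane (fun s => ∑ a ∈ s, f a) with hM₁
    set M₂ : ℝ := 𝒞b.sup' hbne (fun s => ∑ b ∈ s, h b) with hM₂
    have hleM₁ : ∀ s : Finset α, IsChain (· ≤ ·) (s : Set α) → ∑ a ∈ s, f a ≤ M₁ := by
      intro s hs
      exact Finset.le_sup' (fun s => ∑ a ∈ s, f a)
        (by rw [h𝒞a, Finset.mem_filter]; exact ⟨Finset.mem_univ _, hs⟩)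
    have hleM₂ : ∀ s : Finset β, IsChain (· ≤ ·) (s : Set β) → ∑ b ∈ s, h b ≤ M₂ := by
      intro s hs
      exact Finset.le_sup' (fun s => ∑ b ∈ s, h b)
        (by rw [h𝒞b, Finset.mem_filter]; exact ⟨Finset.mem_univ _, hs⟩)
    have hM₁0 : 0 ≤ M₁ := by
      have := hleM₁ ∅ (by simp)
      simpa using this
    have hM₂0 : 0 ≤ M₂ := by
      have := hleM₂ ∅ (by simp)
      simpa using this
    obtain ⟨s₁, hs₁mem, hs₁⟩ := Finset.exists_mem_eq_sup' hane (fun s => ∑ a ∈ s, f a)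
    obtain ⟨s₂, hs₂mem, hs₂⟩ := Finset.exists_mem_eq_sup' hbne (fun s => ∑ b ∈ s, h b)
    have hs₁c : IsChain (· ≤ ·) ((s₁ : Set α)) := by
      have := hs₁mem; rw [h𝒞a, Finset.mem_filter] at this; exact this.2
    have hs₂c : IsChain (· ≤ ·) ((s₂ : Set β)) := by
      have := hs₂mem; rw [h𝒞b, Finset.mem_filter] at this; exact this.2
    have hM12 : M₁ + M₂ ≤ 1 := by
      have hc := disjSum_chain hs₁c hs₂c
      have key := hgc _ hc
      rw [Finset.sum_map, sum_disjSum'] at key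
      have e1 : M₁ = ∑ a ∈ s₁, f a := hs₁
      have e2 : M₂ = ∑ b ∈ s₂, h b := hs₂
      rw [e1, e2]
      exact key
    have hf0 : ∀ a, 0 ≤ f a := fun a => hg0 _
    have hh0 : ∀ b, 0 ≤ h b := fun b => hg0 _
    have hfle : ∀ a, f a ≤ M₁ := by
      intro a
      have := hleM₁ {a} (by simp [Set.subsingleton_singleton.isChain])
      simpa using this
    have hhle : ∀ b, h b ≤ M₂ := by
      intro b
      have := hleM₂ {b} (by simp [Set.subsingleton_singleton.isChain])
      simpa using this
    -- the two normalized points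
    have hx : (fun a => f a / M₁) ∈ chainPoly α := by
      constructor
      · intro a; exact div_nonneg (hf0 a) hM₁0
      · intro s hs
        rw [← Finset.sum_div]
        rcases eq_or_lt_of_le hM₁0 with hM | hM
        · have : ∀ a ∈ s, f a = 0 := fun a _ => le_antisymm (by rw [hM]; exact hfle a) (hf0 a)
          rw [Finset.sum_congr rfl this]
          simp
        · exact div_le_one_of_le₀ (hleM₁ s hs) hM₁0
    have hy : (fun b => h b / M₂) ∈ chainPoly β := by
      constructor
      · intro b; exact div_nonneg (hh0 b) hM₂0
      · intro s hs
        rw [← Finset.sum_div]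
        rcases eq_or_lt_of_le hM₂0 with hM | hM
        · have : ∀ b ∈ s, h b = 0 := fun b _ => le_antisymm (by rw [hM]; exact hhle b) (hh0 b)
          rw [Finset.sum_congr rfl this]
          simp
        · exact div_le_one_of_le₀ (hleM₂ s hs) hM₂0
    set S : Set ((α ⊕ₗ β) → ℝ) :=
      (((fun f => fun i : α ⊕ₗ β => Sum.elim f (0 : β → ℝ) (ofLex i)) '' chainPoly α) ∪
           ((fun g => fun i : α ⊕ₗ β => Sum.elim (0 : α → ℝ) g (ofLex i)) '' chainPoly β)) with hS
    have hp₁ : (fun i : α ⊕ₗ β => Sum.elim (fun a => f a / M₁) (0 : β → ℝ) (ofLex i))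
        ∈ convexHull ℝ S :=
      subset_convexHull ℝ S (Or.inl ⟨_, hx, rfl⟩)
    have hp₂ : (fun i : α ⊕ₗ β => Sum.elim (0 : α → ℝ) (fun b => h b / M₂) (ofLex i))
        ∈ convexHull ℝ S :=
      subset_convexHull ℝ S (Or.inr ⟨_, hy, rfl⟩)
    have hp₀ : (0 : (α ⊕ₗ β) → ℝ) ∈ convexHull ℝ S := by
      apply subset_convexHull ℝ S
      left
      refine ⟨0, zero_mem_chainPoly α, ?_⟩
      funext i
      rcases hi : ofLex i with a | b <;> simp [hi]
    have key : g = M₁ • (fun i : α ⊕ₗ β => Sum.elim (fun a => f a / M₁) (0 : β → ℝ) (ofLex i))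
        + M₂ • (fun i : α ⊕ₗ β => Sum.elim (0 : α → ℝ) (fun b => h b / M₂) (ofLex i))
        + (1 - M₁ - M₂) • (0 : (α ⊕ₗ β) → ℝ) := by
      funext i
      simp only [Pi.add_apply, Pi.smul_apply, smul_eq_mul, Pi.zero_apply, mul_zero, add_zero]
      rcases hi : ofLex i with a | b
      · have hieq : i = toLex (Sum.inl a) := by
          have : toLex (ofLex i) = toLex (Sum.inl a : α ⊕ β) := by rw [hi]
          simpa using this
        subst hieq
        simp only [ofLex_toLex, Sum.elim_inl, Sum.elim_inr, Pi.zero_apply, mul_zero, add_zero]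
        show f a = M₁ * (f a / M₁)
        rcases eq_or_lt_of_le hM₁0 with hM | hM
        · have h0 : f a = 0 := le_antisymm (by rw [hM]; exact hfle a) (hf0 a)
          rw [h0]; simp
        · field_simp
      · have hieq : i = toLex (Sum.inr b) := by
          have : toLex (ofLex i) = toLex (Sum.inr b : α ⊕ β) := by rw [hi]
          simpa using this
        subst hieq
        simp only [ofLex_toLex, Sum.elim_inl, Sum.elim_inr, Pi.zero_apply, mul_zero, zero_add]
        show h b = M₂ * (h b / M₂)
        rcases eq_or_lt_of_le hM₂0 with hM | hM
        · have h0 : h b = 0 := le_antisymm (by rw [hM]; exact hhle b) (hh0 b)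
          rw [h0]; simp
        · field_simp
    rw [key]
    have hconv : Convex ℝ (convexHull ℝ S) := convex_convexHull ℝ S
    set w : Fin 3 → ℝ := ![M₁, M₂, 1 - M₁ - M₂] with hw
    set z : Fin 3 → ((α ⊕ₗ β) → ℝ) :=
      ![(fun i : α ⊕ₗ β => Sum.elim (fun a => f a / M₁) (0 : β → ℝ) (ofLex i)),
        (fun i : α ⊕ₗ β => Sum.elim (0 : α → ℝ) (fun b => h b / M₂) (ofLex i)),
        (0 : (α ⊕ₗ β) → ℝ)] with hz
    have hw0 : ∀ j ∈ (Finset.univ : Finset (Fin 3)), 0 ≤ w j := by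
      intro j _
      fin_cases j
      · exact hM₁0
      · exact hM₂0
      · show (0 : ℝ) ≤ 1 - M₁ - M₂; linarith
    have hw1 : ∑ j ∈ (Finset.univ : Finset (Fin 3)), w j = 1 := by
      rw [hw]; simp [Fin.sum_univ_three]
    have hzm : ∀ j ∈ (Finset.univ : Finset (Fin 3)), z j ∈ convexHull ℝ S := by
      intro j _
      fin_cases j
      · exact hp₁
      · exact hp₂
      · exact hp₀
    have := hconv.sum_mem hw0 hw1 hzm
    rw [hw, hz] at this
    simpa [Fin.sum_univ_three, add_assoc] using this
  · apply convexHull_min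
    · rintro x (⟨f, hf, rfl⟩ | ⟨f, hf, rfl⟩)
      · exact left_mem hf
      · exact right_mem hf
    · exact chainPoly_convex _
end

section
/- The order polytope of an ordinal sum satisfies O(Π₁ ◁ Π₂) = conv( (O(Π₁) × 1_{Π₂}) ∪ (0_{Π₁} × O(Π₂)) ), i.e., it is the convex hull of the copy of O(Π₁) with all Π₂-coordinates equal to 1, together with the copy of O(Π₂) with all Π₁-coordinates equal to 0. -/
theorem orderPoly_convex (α : Type*) [PartialOrder α] [Fintype α] :
    Convex ℝ (orderPoly α) := by
  rintro x ⟨hx01, hxm⟩ y ⟨hy01, hym⟩ a b ha hb hab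
  refine ⟨fun i => ?_, fun i j hij => ?_⟩
  · have h1 := hx01 i; have h2 := hy01 i
    constructor <;> simp only [Pi.add_apply, Pi.smul_apply, smul_eq_mul] <;> nlinarith
  · have h1 := hxm i j hij; have h2 := hym i j hij
    simp only [Pi.add_apply, Pi.smul_apply, smul_eq_mul]
    nlinarith

/-- The order polytope of an ordinal sum `Π₁ ◁ Π₂` is the convex hull of the copy of
`O(Π₁)` with all `Π₂`-coordinates equal to 1, together with the copy of `O(Π₂)` with
all `Π₁`-coordinates equal to 0. -/
theorem stmt_8 (α β : Type*) [PartialOrder α] [Fintype α] [PartialOrder β] [Fintype β] :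
    orderPoly (α ⊕ₗ β)
      = convexHull ℝ
          (((fun f => fun i : α ⊕ₗ β => Sum.elim f (fun _ => (1 : ℝ)) (ofLex i)) ''
              orderPoly α) ∪
           ((fun g => fun i : α ⊕ₗ β => Sum.elim (fun _ => (0 : ℝ)) g (ofLex i)) ''
              orderPoly β)) := by
  apply Set.Subset.antisymm
  · rintro x ⟨hx01, hxm⟩
    set f : α → ℝ := fun a => x (toLex (Sum.inl a)) with hf
    set g : β → ℝ := fun b => x (toLex (Sum.inr b)) with hg
    have hSfin : (insert (0:ℝ) (Set.range f)).Finite := (Set.finite_range f).insert 0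
    have hSbdd : BddAbove (insert (0:ℝ) (Set.range f)) := hSfin.bddAbove
    set t : ℝ := sSup (insert (0:ℝ) (Set.range f)) with ht
    have ht0 : 0 ≤ t := le_csSup hSbdd (Set.mem_insert _ _)
    have hft : ∀ a, f a ≤ t := fun a => le_csSup hSbdd (Set.mem_insert_iff.2 (Or.inr ⟨a, rfl⟩))
    have htle : ∀ r : ℝ, 0 ≤ r → (∀ a, f a ≤ r) → t ≤ r := by
      intro r h0 hr
      refine csSup_le ⟨0, Set.mem_insert _ _⟩ ?_
      rintro s (rfl | ⟨a, rfl⟩)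
      · exact h0
      · exact hr a
    have ht1 : t ≤ 1 := htle 1 zero_le_one fun a => (hx01 _).2
    have htg : ∀ b, t ≤ g b := fun b =>
      htle _ (hx01 _).1 fun a => hxm _ _ (Sum.Lex.inl_le_inr a b)
    set h : α → ℝ := fun a => if t = 0 then 1 else f a / t with hh
    set k : β → ℝ := fun b => if t = 1 then 0 else (g b - t) / (1 - t) with hk
    have hhmem : h ∈ orderPoly α := by
      by_cases h0 : t = 0
      · simp only [orderPoly, Set.mem_setOf_eq, hh, h0, if_pos rfl]
        exact ⟨fun i => ⟨zero_le_one, le_refl 1⟩, fun i j _ => le_refl 1⟩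
      · have htpos : 0 < t := lt_of_le_of_ne ht0 (Ne.symm h0)
        refine ⟨fun a => ?_, fun a a' haa => ?_⟩
        · simp only [hh, if_neg h0]
          constructor
          · exact div_nonneg (hx01 _).1 ht0
          · exact div_le_one_of_le₀ (hft a) ht0
        · simp only [hh, if_neg h0]
          exact div_le_div_of_nonneg_right (hxm _ _ (Sum.Lex.inl_le_inl_iff.2 haa)) ht0
    have hkmem : k ∈ orderPoly β := by
      by_cases h1 : t = 1
      · simp only [orderPoly, Set.mem_setOf_eq, hk, h1, if_pos rfl]
        exact ⟨fun i => ⟨le_refl 0, zero_le_one⟩, fun i j _ => le_refl 0⟩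
      · have htlt : t < 1 := lt_of_le_of_ne ht1 h1
        have hpos : 0 < 1 - t := by linarith
        refine ⟨fun b => ?_, fun b b' hbb => ?_⟩
        · simp only [hk, if_neg h1]
          constructor
          · exact div_nonneg (by linarith [htg b]) hpos.le
          · exact div_le_one_of_le₀ (by linarith [(hx01 (toLex (Sum.inr b))).2]) hpos.le
        · simp only [hk, if_neg h1]
          have := hxm _ _ (Sum.Lex.inr_le_inr_iff.2 hbb)
          exact div_le_div_of_nonneg_right (by linarith [this]) hpos.le
    set P : (α ⊕ₗ β) → ℝ := fun i => Sum.elim h (fun _ => (1:ℝ)) (ofLex i) with hP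
    set Q : (α ⊕ₗ β) → ℝ := fun i => Sum.elim (fun _ => (0:ℝ)) k (ofLex i) with hQ
    have hPmem : P ∈ (((fun f => fun i : α ⊕ₗ β => Sum.elim f (fun _ => (1 : ℝ)) (ofLex i)) ''
              orderPoly α) ∪
           ((fun g => fun i : α ⊕ₗ β => Sum.elim (fun _ => (0 : ℝ)) g (ofLex i)) ''
              orderPoly β)) := Or.inl ⟨h, hhmem, rfl⟩
    have hQmem : Q ∈ (((fun f => fun i : α ⊕ₗ β => Sum.elim f (fun _ => (1 : ℝ)) (ofLex i)) ''
              orderPoly α) ∪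
           ((fun g => fun i : α ⊕ₗ β => Sum.elim (fun _ => (0 : ℝ)) g (ofLex i)) ''
              orderPoly β)) := Or.inr ⟨k, hkmem, rfl⟩
    have key : x = t • P + (1 - t) • Q := by
      funext i
      rcases hi : ofLex i with a | b
      · have hxi : x i = f a := by
          rw [hf]; congr 1
        simp only [Pi.add_apply, Pi.smul_apply, smul_eq_mul, hP, hQ, hi, Sum.elim_inl, hxi]
        by_cases h0 : t = 0
        · have : f a = 0 := le_antisymm (h0 ▸ hft a) (hx01 _).1
          simp [hh, h0, this]
        · simp only [hh, if_neg h0]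
          try field_simp
          try ring
      · have hxi : x i = g b := by
          rw [hg]; congr 1
        simp only [Pi.add_apply, Pi.smul_apply, smul_eq_mul, hP, hQ, hi, Sum.elim_inr, hxi]
        by_cases h1 : t = 1
        · have : g b = 1 := le_antisymm (hx01 _).2 (h1 ▸ htg b)
          simp [hk, h1, this]
        · simp only [hk, if_neg h1]
          have hne : (1 : ℝ) - t ≠ 0 := by intro hc; apply h1; linarith
          try field_simp
          try ring
    rw [key]
    exact (convex_convexHull ℝ _) (subset_convexHull ℝ _ hPmem) (subset_convexHull ℝ _ hQmem)
      ht0 (by linarith) (by ring)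
  · apply convexHull_min _ (orderPoly_convex _)
    rintro y (⟨f, ⟨hf01, hfm⟩, rfl⟩ | ⟨g, ⟨hg01, hgm⟩, rfl⟩)
    · refine ⟨fun i => ?_, fun i j hij => ?_⟩
      · rcases hi : ofLex i with a | b
        · simpa [hi] using hf01 a
        · simp [hi]
      · rcases hi : ofLex i with a | b <;> rcases hj : ofLex j with a' | b'
        · simp only [hi, hj, Sum.elim_inl]
          have : toLex (Sum.inl a : α ⊕ β) ≤ toLex (Sum.inl a') := by
            rw [← hi, ← hj]; exact hij
          exact hfm a a' (Sum.Lex.inl_le_inl_iff.1 this)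
        · simp only [hi, hj, Sum.elim_inl, Sum.elim_inr]
          exact (hf01 a).2
        · exfalso
          have : toLex (Sum.inr b : α ⊕ β) ≤ toLex (Sum.inl a') := by
            rw [← hi, ← hj]; exact hij
          exact Sum.Lex.not_inr_le_inl this
        · simp [hi, hj]
    · refine ⟨fun i => ?_, fun i j hij => ?_⟩
      · rcases hi : ofLex i with a | b
        · simp [hi]
        · simpa [hi] using hg01 b
      · rcases hi : ofLex i with a | b <;> rcases hj : ofLex j with a' | b'
        · simp [hi, hj]
        · simp only [hi, hj, Sum.elim_inl, Sum.elim_inr]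
          exact (hg01 b').1
        · exfalso
          have : toLex (Sum.inr b : α ⊕ β) ≤ toLex (Sum.inl a') := by
            rw [← hi, ← hj]; exact hij
          exact Sum.Lex.not_inr_le_inl this
        · simp only [hi, hj, Sum.elim_inr]
          have : toLex (Sum.inr b : α ⊕ β) ≤ toLex (Sum.inr b') := by
            rw [← hi, ← hj]; exact hij
          exact hgm b b' (Sum.Lex.inr_le_inr_iff.1 this)
end

section
/- If Π = Π₁ ◁ Π₂ is an ordinal sum of finite posets, then the h*-polynomial of the order polytope of Π is the product of the h*-polynomials of the order polytopes of Π₁ and Π₂: h*_Π(z) = h*_{Π₁}(z) · h*_{Π₂}(z). -/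
open scoped Pointwise

def Lp (α : Type*) [PartialOrder α] (k : ℕ) : Type _ :=
  {x : α → ℤ // (∀ i, 0 ≤ x i ∧ x i ≤ (k : ℤ)) ∧ ∀ i j : α, i ≤ j → x i ≤ x j}

section
variable {α β : Type*} [PartialOrder α] [PartialOrder β]

/-- glue a pair into a lattice point of the order polytope of the lex sum -/
def glue (k m : ℕ) (hm : m ≤ k) (x : Lp α m) (y : Lp β (k - m)) : Lp (α ⊕ₗ β) k := by
  refine ⟨fun p => Sum.elim x.1 (fun j => y.1 j + (m : ℤ)) (ofLex p), ?_, ?_⟩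
  · intro p
    rcases p with i | j
    · refine ⟨(x.2.1 i).1, ?_⟩
      show x.1 i ≤ (k : ℤ)
      have h1 : x.1 i ≤ (m : ℤ) := (x.2.1 i).2
      have hmk : (m : ℤ) ≤ k := by exact_mod_cast hm
      exact h1.trans hmk
    · have h1 := (y.2.1 j).1
      have h2 := (y.2.1 j).2
      have hc : ((k - m : ℕ) : ℤ) = (k : ℤ) - m := by push_cast [hm]; ring
      constructor
      · show 0 ≤ y.1 j + (m : ℤ); positivity
      · show y.1 j + (m : ℤ) ≤ k; omega
  · intro p q h
    rcases p with i | j <;> rcases q with i' | j'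
    · exact x.2.2 _ _ (Sum.Lex.inl_le_inl_iff.mp h)
    · show x.1 i ≤ y.1 j' + (m : ℤ)
      have h1 := (x.2.1 i).2
      have h2 := (y.2.1 j').1
      linarith
    · exact absurd h Sum.Lex.not_inr_le_inl
    · show y.1 j + (m : ℤ) ≤ y.1 j' + (m : ℤ)
      have := y.2.2 _ _ (Sum.Lex.inr_le_inr_iff.mp h)
      linarith

open scoped Classical in
/-- the map realizing the bijection -/
noncomputable def phi (k : ℕ) :
    (Σ m : Fin (k + 1), Lp α m × Lp β (k - m)) →
      Lp (α ⊕ₗ β) k ⊕ (Σ m : Fin k, Lp α m × Lp β (k - 1 - m)) :=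
  fun d =>
    if h : (d.1 : ℕ) ≠ 0 ∧ ∀ i, d.2.1.1 i ≤ (((d.1 : ℕ) : ℤ)) - 1 then
      Sum.inr ⟨⟨(d.1 : ℕ) - 1, by have := d.1.2; omega⟩,
        ⟨d.2.1.1, ⟨fun i => ⟨(d.2.1.2.1 i).1, by
            show d.2.1.1 i ≤ (((d.1 : ℕ) - 1 : ℕ) : ℤ)
            have h2 := h.2 i
            have h0 := h.1
            omega⟩,
          d.2.1.2.2⟩⟩,
        ⟨d.2.2.1, ⟨fun j => ⟨(d.2.2.2.1 j).1, by
            have hb := (d.2.2.2.1 j).2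
            have hd := d.1.2
            show d.2.2.1 j ≤ ((k - 1 - ((d.1:ℕ) - 1) : ℕ) : ℤ)
            have hc : (k - 1 - ((d.1:ℕ) - 1) : ℕ) = (k - (d.1:ℕ) : ℕ) := by
              have := h.1; omega
            rw [hc]
            exact hb⟩,
          d.2.2.2.2⟩⟩⟩
    else
      Sum.inl (glue k d.1 (by have := d.1.2; omega) d.2.1 d.2.2)

end

section
variable {α β : Type*} [PartialOrder α] [PartialOrder β]

lemma phi_inj (k : ℕ) : Function.Injective (phi (α := α) (β := β) k) := by
  classical
  intro d d' he
  obtain ⟨m, x, y⟩ := d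
  obtain ⟨m', x', y'⟩ := d'
  simp only [phi] at he
  split_ifs at he with h1 h2 h2
  · -- both inr
    simp only [Sum.inr.injEq] at he
    have hm : (m : ℕ) = (m' : ℕ) := by
      have := congrArg (fun s => (s.1 : ℕ)) he
      simp only at this
      omega
    have hmm : m = m' := Fin.ext hm
    subst hmm
    simp only [Sigma.mk.inj_iff, heq_eq_eq, Prod.mk.injEq, Subtype.mk.injEq, true_and] at he
    obtain ⟨hx, hy⟩ := Prod.mk.inj he
    have hx' : x.1 = x'.1 := Subtype.mk_eq_mk.mp hx
    have hy' : y.1 = y'.1 := Subtype.mk_eq_mk.mp hy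
    exact Sigma.ext rfl (heq_of_eq (Prod.ext (Subtype.ext hx') (Subtype.ext hy')))
  · -- both inl
    simp only [Sum.inl.injEq] at he
    have hfun := congrArg Subtype.val he
    have hx : ∀ i, x.1 i = x'.1 i := fun i => congrFun hfun (toLex (Sum.inl i))
    have hyy : ∀ j, y.1 j + ((m:ℕ) : ℤ) = y'.1 j + ((m':ℕ) : ℤ) :=
      fun j => congrFun hfun (toLex (Sum.inr j))
    push_neg at h1 h2
    have hattain : ∀ (n : Fin (k+1)) (w : Lp α n), ((n:ℕ) ≠ 0 → ∃ i, ((n:ℕ):ℤ) - 1 < w.1 i) →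
        ∀ (n' : Fin (k+1)) (w' : Lp α n'), (∀ i, w.1 i = w'.1 i) → (n:ℕ) ≤ (n':ℕ) := by
      intro n w h n' w' hw
      by_cases hn : (n:ℕ) = 0
      · omega
      · obtain ⟨i, hi⟩ := h hn
        have h1 := (w.2.1 i).2
        have h2 := (w'.2.1 i).2
        rw [hw i] at hi h1
        omega
    have hm : (m : ℕ) = (m' : ℕ) :=
      le_antisymm (hattain m x h1 m' x' hx) (hattain m' x' h2 m x (fun i => (hx i).symm))
    have hmm : m = m' := Fin.ext hm
    subst hmm
    have hy : ∀ j, y.1 j = y'.1 j := fun j => by have := hyy j; omega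
    exact Sigma.ext rfl (heq_of_eq (Prod.ext (Subtype.ext (funext hx)) (Subtype.ext (funext hy))))

lemma phi_surj [Fintype α] (k : ℕ) : Function.Surjective (phi (α := α) (β := β) k) := by
  classical
  rintro (z | ⟨m', x, y⟩)
  · -- inl case
    set t : ℕ := Finset.univ.sup (fun i : α => (z.1 (toLex (Sum.inl i))).toNat) with ht
    have htk : t ≤ k := Finset.sup_le fun i _ => by
      have := (z.2.1 (toLex (Sum.inl i))).2
      omega
    have hx_le : ∀ i, z.1 (toLex (Sum.inl i)) ≤ (t : ℤ) := fun i => by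
      have h : (z.1 (toLex (Sum.inl i))).toNat ≤ t := by
        rw [ht]
        exact Finset.le_sup (f := fun i : α => (z.1 (toLex (Sum.inl i))).toNat)
          (Finset.mem_univ i)
      have h0 := (z.2.1 (toLex (Sum.inl i))).1
      omega
    have hy_ge : ∀ j, (t : ℤ) ≤ z.1 (toLex (Sum.inr j)) := fun j => by
      have h1 : t ≤ (z.1 (toLex (Sum.inr j))).toNat :=
        Finset.sup_le fun i _ => Int.toNat_le_toNat (z.2.2 _ _ (Sum.Lex.inl_le_inr i j))
      have h0 := (z.2.1 (toLex (Sum.inr j))).1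
      omega
    refine ⟨⟨⟨t, by omega⟩,
      ⟨fun i => z.1 (toLex (Sum.inl i)),
        ⟨fun i => ⟨(z.2.1 _).1, hx_le i⟩,
         fun i i' hii => z.2.2 _ _ (Sum.Lex.inl_le_inl_iff.mpr hii)⟩⟩,
      ⟨fun j => z.1 (toLex (Sum.inr j)) - t,
        ⟨fun j => ⟨by
            have := hy_ge j
            show (0 : ℤ) ≤ z.1 (toLex (Sum.inr j)) - t
            omega, by
            have h2 := (z.2.1 (toLex (Sum.inr j))).2
            show z.1 (toLex (Sum.inr j)) - (t : ℤ) ≤ ((k - t : ℕ) : ℤ)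
            omega⟩,
         fun j j' hjj => by
            have := z.2.2 _ _ (Sum.Lex.inr_le_inr_iff.mpr hjj)
            show z.1 (toLex (Sum.inr j)) - (t : ℤ) ≤ z.1 (toLex (Sum.inr j')) - t
            omega⟩⟩⟩, ?_⟩
    have hneg : ¬((t : ℕ) ≠ 0 ∧ ∀ i, z.1 (toLex (Sum.inl i)) ≤ ((t : ℕ) : ℤ) - 1) := by
      rintro ⟨ht0, hall⟩
      rcases isEmpty_or_nonempty α with hE | hN
      · have : t = 0 := by simp [ht, Finset.univ_eq_empty]
        exact ht0 this
      · obtain ⟨i0, -, hi0⟩ := Finset.exists_mem_eq_sup Finset.univ Finset.univ_nonempty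
          (fun i : α => (z.1 (toLex (Sum.inl i))).toNat)
        rw [← ht] at hi0
        have h0 := (z.2.1 (toLex (Sum.inl i0))).1
        have h1 := hall i0
        omega
    simp only [phi]
    rw [dif_neg hneg]
    congr 1
    apply Subtype.ext
    funext p
    rcases p with i | j
    · rfl
    · show z.1 (toLex (Sum.inr j)) - (t : ℤ) + (t : ℤ) = z.1 (toLex (Sum.inr j))
      omega
  · -- inr case
    refine ⟨⟨⟨(m' : ℕ) + 1, by have := m'.2; omega⟩,
      ⟨x.1, ⟨fun i => ⟨(x.2.1 i).1, by have := (x.2.1 i).2; push_cast; omega⟩, x.2.2⟩⟩,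
      ⟨y.1, ⟨fun j => ⟨(y.2.1 j).1, by
          have := (y.2.1 j).2
          have hc : ((k - ((m':ℕ)+1) : ℕ)) = ((k - 1 - (m':ℕ) : ℕ)) := by omega
          rw [hc]; exact this⟩, y.2.2⟩⟩⟩, ?_⟩
    simp only [phi]
    rw [dif_pos ⟨by simp, fun i => by have := (x.2.1 i).2; simp; omega⟩]
    rfl

end

instance Lp.finite (α : Type*) [PartialOrder α] [Finite α] (k : ℕ) : Finite (Lp α k) := by
  have hinj : Function.Injective
      (fun x : Lp α k => (fun i => (⟨(x.1 i).toNat, by have := x.2.1 i; omega⟩ : Fin (k+1)))) := by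
    intro x y h
    apply Subtype.ext
    funext i
    have hx := (x.2.1 i).1
    have hy := (y.2.1 i).1
    have := congrFun h i
    rw [Fin.mk.injEq] at this
    omega
  exact Finite.of_injective _ hinj

instance (α β : Type*) [Finite α] [Finite β] : Finite (α ⊕ₗ β) :=
  inferInstanceAs (Finite (α ⊕ β))

lemma key_card (α β : Type*) [PartialOrder α] [Fintype α] [PartialOrder β] [Fintype β] (k : ℕ) :
    Nat.card (Lp (α ⊕ₗ β) k) +
        ∑ m ∈ Finset.range k, Nat.card (Lp α m) * Nat.card (Lp β (k - 1 - m)) =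
      ∑ m ∈ Finset.range (k + 1), Nat.card (Lp α m) * Nat.card (Lp β (k - m)) := by
  classical
  letI : ∀ n : ℕ, Fintype (Lp α n) := fun n => Fintype.ofFinite _
  letI : ∀ n : ℕ, Fintype (Lp β n) := fun n => Fintype.ofFinite _
  letI : Fintype (Lp (α ⊕ₗ β) k) := Fintype.ofFinite _
  have hb := Nat.card_eq_of_bijective _ ⟨phi_inj (α := α) (β := β) k, phi_surj k⟩
  simp only [Nat.card_eq_fintype_card, Fintype.card_sigma, Fintype.card_prod,
    Fintype.card_sum] at hb ⊢
  rw [Fin.sum_univ_eq_sum_range (fun m => Fintype.card (Lp α m) * Fintype.card (Lp β (k - m))),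
    Fin.sum_univ_eq_sum_range (fun m => Fintype.card (Lp α m) * Fintype.card (Lp β (k - 1 - m)))]
    at hb
  omega
lemma Lp.mem_iff (α : Type*) [PartialOrder α] [Fintype α] (k : ℕ) (x : α → ℤ) :
    ((fun i => (x i : ℝ)) ∈ (k : ℝ) • orderPoly α) ↔
      ((∀ i, 0 ≤ x i ∧ x i ≤ (k : ℤ)) ∧ ∀ i j : α, i ≤ j → x i ≤ x j) := by
  rcases Nat.eq_zero_or_pos k with hk | hk
  · subst hk
    rw [Nat.cast_zero, Set.zero_smul_set ⟨0, by constructor <;> intros <;> simp⟩]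
    constructor
    · intro h
      have hz : ∀ i, x i = 0 := by
        intro i
        have : (fun i => (x i : ℝ)) i = (0 : α → ℝ) i := by rw [h]
        simp only [Pi.zero_apply] at this
        exact_mod_cast this
      exact ⟨fun i => by simp [hz i], fun i j _ => by simp [hz i, hz j]⟩
    · intro ⟨h1, _⟩
      have hz : ∀ i, x i = 0 := fun i => le_antisymm (by exact_mod_cast (h1 i).2) (h1 i).1
      show _ ∈ (0 : Set (α → ℝ))
      rw [Set.mem_zero]
      funext i
      simp [hz i]
  · have hkpos : (0 : ℝ) < k := by positivity
    have hk0 : (k : ℝ) ≠ 0 := ne_of_gt hkpos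
    rw [Set.mem_smul_set_iff_inv_smul_mem₀ hk0]
    simp only [orderPoly, Set.mem_setOf_eq, Pi.smul_apply, smul_eq_mul, inv_mul_eq_div]
    constructor
    · rintro ⟨h1, h2⟩
      refine ⟨fun i => ?_, fun i j hij => ?_⟩
      · obtain ⟨a, b⟩ := h1 i
        rw [le_div_iff₀ hkpos, zero_mul] at a
        rw [div_le_one hkpos] at b
        exact ⟨by exact_mod_cast a, by exact_mod_cast b⟩
      · have := h2 i j hij
        rw [div_le_div_iff_of_pos_right hkpos] at this
        exact_mod_cast this
    · rintro ⟨h1, h2⟩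
      refine ⟨fun i => ?_, fun i j hij => ?_⟩
      · obtain ⟨a, b⟩ := h1 i
        constructor
        · rw [le_div_iff₀ hkpos, zero_mul]; exact_mod_cast a
        · rw [div_le_one hkpos]; exact_mod_cast b
      · rw [div_le_div_iff_of_pos_right hkpos]
        exact_mod_cast h2 i j hij


/-- The Ehrhart series of the order polytope of `α`: the power series whose `k`-th
coefficient is the number of lattice points of the `k`-th dilate of `O(α)`. -/
noncomputable def ehrSeries (α : Type*) [PartialOrder α] [Fintype α] : PowerSeries ℤ :=
  PowerSeries.mk fun k =>
    (Nat.card {x : α → ℤ // (fun i => (x i : ℝ)) ∈ (k : ℝ) • orderPoly α} : ℤ)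

/-- The `h*`-polynomial of the order polytope of `α` (as a power series):
`h*(z) = Ehr(z) · (1 − z)^(d+1)` where `d = #α`. -/
noncomputable def hstar (α : Type*) [PartialOrder α] [Fintype α] : PowerSeries ℤ :=
  ehrSeries α * (1 - PowerSeries.X) ^ (Fintype.card α + 1)

lemma ehr_coeff (α : Type*) [PartialOrder α] [Fintype α] (k : ℕ) :
    PowerSeries.coeff k (ehrSeries α) = (Nat.card (Lp α k) : ℤ) := by
  rw [ehrSeries, PowerSeries.coeff_mk]
  congr 1
  exact Nat.card_congr (Equiv.subtypeEquivRight fun x => Lp.mem_iff α k x)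

lemma ehr_mul (α β : Type*) [PartialOrder α] [Fintype α] [PartialOrder β] [Fintype β] :
    ehrSeries (α ⊕ₗ β) = ehrSeries α * ehrSeries β * (1 - PowerSeries.X) := by
  ext n
  rw [mul_one_sub, map_sub]
  have hab : ∀ n : ℕ, PowerSeries.coeff n (ehrSeries α * ehrSeries β) =
      ∑ m ∈ Finset.range (n + 1), (Nat.card (Lp α m) : ℤ) * (Nat.card (Lp β (n - m)) : ℤ) := by
    intro n
    rw [PowerSeries.coeff_mul, Finset.Nat.sum_antidiagonal_eq_sum_range_succ_mk]
    exact Finset.sum_congr rfl fun m _ => by rw [ehr_coeff, ehr_coeff]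
  cases n with
  | zero =>
    rw [PowerSeries.coeff_zero_mul_X, hab, ehr_coeff]
    have := key_card α β 0
    simp only [Finset.range_zero, Finset.sum_empty, add_zero] at this
    rw [this]
    push_cast
    ring
  | succ n =>
    rw [PowerSeries.coeff_succ_mul_X, hab, hab, ehr_coeff]
    have h := key_card α β (n + 1)
    simp only [Nat.add_sub_cancel] at h
    have h2 : ((Nat.card (Lp (α ⊕ₗ β) (n + 1)) : ℤ) +
        ∑ m ∈ Finset.range (n + 1), (Nat.card (Lp α m) : ℤ) * (Nat.card (Lp β (n - m)) : ℤ)) =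
        ∑ m ∈ Finset.range (n + 1 + 1),
          (Nat.card (Lp α m) : ℤ) * (Nat.card (Lp β (n + 1 - m)) : ℤ) := by
      exact_mod_cast congrArg (Nat.cast (R := ℤ)) h
    linarith

/-- The `h*`-polynomial of the order polytope of an ordinal sum `Π₁ ◁ Π₂` is the
product of the `h*`-polynomials of the order polytopes of `Π₁` and `Π₂`. -/
theorem stmt_9 (α β : Type*) [PartialOrder α] [Fintype α] [PartialOrder β] [Fintype β] :
    hstar (α ⊕ₗ β) = hstar α * hstar β := by
  rw [hstar, hstar, hstar, ehr_mul]
  have hcard : Fintype.card (α ⊕ₗ β) = Fintype.card α + Fintype.card β := by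
    rw [show Fintype.card (α ⊕ₗ β) = Fintype.card (α ⊕ β) from
      Fintype.card_congr (ofLex : α ⊕ₗ β ≃ α ⊕ β)]
    exact Fintype.card_sum
  rw [hcard]
  ring
end

section
/- The ordinal sum Π₁ ◁ Π₂ of two finite posets is level if and only if both Π₁ and Π₂ are level. -/
/-- `x` is an interior lattice point of the cone over the order polytope of `α`
at height `c`: `0 < x i < c` and `x` strictly order-preserving. -/
def OIntPt (α : Type*) [PartialOrder α] (c : ℕ) (x : α → ℤ) : Prop :=
  (∀ i, 0 < x i ∧ x i < (c : ℤ)) ∧ ∀ i j : α, i < j → x i < x j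

/-- `x` is a lattice point of the cone over the order polytope of `α` at height `c`:
`0 ≤ x i ≤ c` and `x` order-preserving. -/
def OConePt (α : Type*) [PartialOrder α] (c : ℕ) (x : α → ℤ) : Prop :=
  (∀ i, 0 ≤ x i ∧ x i ≤ (c : ℤ)) ∧ ∀ i j : α, i ≤ j → x i ≤ x j

/-- The codegree of the order polytope of `α`: the least positive `c` such that
`c · O(α)` has an interior lattice point. -/
noncomputable def posetCodeg (α : Type*) [PartialOrder α] : ℕ :=
  sInf {c : ℕ | 0 < c ∧ ∃ x : α → ℤ, OIntPt α c x}

/-- A finite poset is level if every interior lattice point of the cone over its order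
polytope decomposes as an interior lattice point at height `codeg` plus a point of the
cone. -/
def PosetLevel (α : Type*) [PartialOrder α] : Prop :=
  ∀ (k : ℕ) (x : α → ℤ), OIntPt α k x →
    ∃ y : α → ℤ, OIntPt α (posetCodeg α) y ∧ OConePt α (k - posetCodeg α) (x - y)

open scoped Classical

set_option linter.unusedSectionVars false

section Dn

variable {α : Type*} [PartialOrder α] [Fintype α]

/-- The number of elements in the longest chain with top element `a`. -/
noncomputable def dn (a : α) : ℕ :=
  1 + (Finset.univ.filter (fun b => b < a)).attach.sup (fun b => dn b.1)
termination_by wellFounded_lt.wrap a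
decreasing_by exact (Finset.mem_filter.mp b.2).2

lemma one_le_dn (a : α) : 1 ≤ dn a := by
  rw [dn]; exact Nat.le_add_right 1 _

lemma dn_lt_dn {a b : α} (h : a < b) : dn a < dn b := by
  conv_rhs => rw [dn]
  have hm : (⟨a, Finset.mem_filter.mpr ⟨Finset.mem_univ a, h⟩⟩ :
      {x // x ∈ (Finset.univ.filter (fun c => c < b))}) ∈
      (Finset.univ.filter (fun c => c < b)).attach := Finset.mem_attach _ _
  have := Finset.le_sup (f := fun c : {x // x ∈ (Finset.univ.filter (fun c => c < b))} => dn c.1) hm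
  dsimp only at this
  omega

lemma dn_le_of {w : α → ℤ} (h1 : ∀ i, 0 < w i) (h2 : ∀ i j : α, i < j → w i < w j) (a : α) :
    (dn a : ℤ) ≤ w a := by
  induction a using WellFoundedLT.induction with
  | _ a IH =>
    rw [dn]
    have hs : (Finset.univ.filter (fun b => b < a)).attach.sup
        (fun b => dn b.1) ≤ (w a - 1).toNat := by
      apply Finset.sup_le
      intro b _
      have hb : b.1 < a := (Finset.mem_filter.mp b.2).2
      have h3 := IH b.1 hb
      have h4 := h2 b.1 a hb
      omega
    have h5 := h1 a
    omega

/-- The number of elements in the longest chain with bottom element `a`. -/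
noncomputable def up (a : α) : ℕ := dn (α := αᵒᵈ) (OrderDual.toDual a)

lemma one_le_up (a : α) : 1 ≤ up a := one_le_dn _

lemma up_lt_up {a b : α} (h : a < b) : up b < up a :=
  dn_lt_dn (α := αᵒᵈ) (show OrderDual.toDual b < OrderDual.toDual a from h)

lemma up_le_of {c : ℕ} {w : α → ℤ} (h1 : ∀ i, w i < (c : ℤ))
    (h2 : ∀ i j : α, i < j → w i < w j) (a : α) : w a + (up a : ℤ) ≤ (c : ℤ) := by
  have := dn_le_of (α := αᵒᵈ) (w := fun b => (c : ℤ) - w (OrderDual.ofDual b))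
    (fun i => by have := h1 (OrderDual.ofDual i); omega)
    (fun i j hij => by
      have hji : OrderDual.ofDual j < OrderDual.ofDual i := hij
      have := h2 _ _ hji
      omega)
    (OrderDual.toDual a)
  simp only [OrderDual.ofDual_toDual] at this
  have hup : up a = dn (α := αᵒᵈ) (OrderDual.toDual a) := rfl
  omega

end Dn

section Codeg
variable {α : Type*} [PartialOrder α] [Fintype α]

lemma oIntPt_dn : OIntPt α (Finset.univ.sup (dn (α := α)) + 1) (fun a => (dn a : ℤ)) := by
  constructor
  · intro i
    dsimp only
    have h1 := one_le_dn i
    have h2 : dn i ≤ Finset.univ.sup (dn (α := α)) := Finset.le_sup (Finset.mem_univ i)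
    omega
  · intro i j h
    have := dn_lt_dn h
    dsimp only
    omega

lemma codeg_le {c : ℕ} {x : α → ℤ} (hc : 0 < c) (hx : OIntPt α c x) : posetCodeg α ≤ c :=
  Nat.sInf_le ⟨hc, x, hx⟩

lemma codeg_set_nonempty : {c : ℕ | 0 < c ∧ ∃ x : α → ℤ, OIntPt α c x}.Nonempty :=
  ⟨_, Nat.succ_pos _, _, oIntPt_dn⟩

lemma codeg_spec : 0 < posetCodeg α ∧ ∃ x : α → ℤ, OIntPt α (posetCodeg α) x :=
  Nat.sInf_mem codeg_set_nonempty

lemma two_le_codeg [Nonempty α] : 2 ≤ posetCodeg α := by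
  obtain ⟨hpos, x, hx⟩ := codeg_spec (α := α)
  have := hx.1 (Classical.arbitrary α)
  omega

lemma codeg_eq_dn [Nonempty α] : posetCodeg α = Finset.univ.sup (dn (α := α)) + 1 := by
  apply le_antisymm (codeg_le (Nat.succ_pos _) oIntPt_dn)
  apply le_csInf codeg_set_nonempty
  rintro c ⟨hc, x, hx⟩
  obtain ⟨a, -, ha⟩ := Finset.exists_mem_eq_sup Finset.univ Finset.univ_nonempty (dn (α := α))
  have h1 := dn_le_of (fun i => (hx.1 i).1) hx.2 a
  have h2 := (hx.1 a).2
  omega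

lemma OIntPt.dualFn {c : ℕ} {x : α → ℤ} (h : OIntPt α c x) :
    OIntPt αᵒᵈ c (fun b => (c : ℤ) - x (OrderDual.ofDual b)) := by
  constructor
  · intro i
    dsimp only
    have := h.1 (OrderDual.ofDual i)
    omega
  · intro i j hij
    dsimp only
    have := h.2 _ _ (show OrderDual.ofDual j < OrderDual.ofDual i from hij)
    omega

lemma OIntPt.ofDualFn {c : ℕ} {x : αᵒᵈ → ℤ} (h : OIntPt αᵒᵈ c x) :
    OIntPt α c (fun a => (c : ℤ) - x (OrderDual.toDual a)) := by
  constructor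
  · intro i
    dsimp only
    have := h.1 (OrderDual.toDual i)
    omega
  · intro i j hij
    dsimp only
    have := h.2 (OrderDual.toDual j) (OrderDual.toDual i)
      (show OrderDual.toDual j < OrderDual.toDual i from hij)
    omega

lemma codeg_dual : posetCodeg αᵒᵈ = posetCodeg α := by
  unfold posetCodeg
  congr 1
  ext c
  constructor
  · rintro ⟨hc, x, hx⟩
    exact ⟨hc, _, hx.ofDualFn⟩
  · rintro ⟨hc, x, hx⟩
    exact ⟨hc, _, hx.dualFn⟩

lemma sup_dn_dual : Finset.univ.sup (dn (α := αᵒᵈ)) = Finset.univ.sup (up (α := α)) := by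
  apply le_antisymm
  · exact Finset.sup_le fun b _ =>
      Finset.le_sup (f := up (α := α)) (Finset.mem_univ (OrderDual.ofDual b))
  · exact Finset.sup_le fun a _ =>
      Finset.le_sup (f := dn (α := αᵒᵈ)) (Finset.mem_univ (OrderDual.toDual a))

lemma codeg_eq_up [Nonempty α] : posetCodeg α = Finset.univ.sup (up (α := α)) + 1 := by
  rw [← codeg_dual (α := α), codeg_eq_dn (α := αᵒᵈ), sup_dn_dual]

lemma level_of_isEmpty [IsEmpty α] : PosetLevel α := by
  intro k x _
  exact ⟨x, ⟨fun i => isEmptyElim i, fun i j _ => isEmptyElim i⟩,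
    ⟨fun i => isEmptyElim i, fun i j _ => isEmptyElim i⟩⟩

end Codeg

section SumLemmas

variable {α β : Type*} [PartialOrder α] [Fintype α] [PartialOrder β] [Fintype β]

lemma OIntPt.inlRes {c : ℕ} {x : α ⊕ₗ β → ℤ} (h : OIntPt (α ⊕ₗ β) c x) :
    OIntPt α c (fun a => x (Sum.inl a)) :=
  ⟨fun i => h.1 _, fun i j hij => h.2 _ _ (Sum.Lex.inl_lt_inl_iff.mpr hij)⟩

lemma OIntPt.inrRes {c : ℕ} {x : α ⊕ₗ β → ℤ} (h : OIntPt (α ⊕ₗ β) c x) :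
    OIntPt β c (fun b => x (Sum.inr b)) :=
  ⟨fun i => h.1 _, fun i j hij => h.2 _ _ (Sum.Lex.inr_lt_inr_iff.mpr hij)⟩

lemma codeg_sum_le [Nonempty α] [Nonempty β] :
    posetCodeg (α ⊕ₗ β) ≤ posetCodeg α + posetCodeg β - 1 := by
  obtain ⟨hposα, u, hu⟩ := codeg_spec (α := α)
  obtain ⟨hposβ, v, hv⟩ := codeg_spec (α := β)
  have h2α := two_le_codeg (α := α)
  have h2β := two_le_codeg (α := β)
  apply codeg_le (α := α ⊕ₗ β) (x := (Sum.elim u (fun b => (posetCodeg α : ℤ) - 1 + v b) : α ⊕ₗ β → ℤ))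
    (by omega)
  constructor
  · intro i
    rcases i with a | b
    · have := hu.1 a
      simp only [Sum.elim_inl]
      omega
    · have := hv.1 b
      simp only [Sum.elim_inr]
      omega
  · intro i j hij
    rcases i with a | b <;> rcases j with a' | b'
    · have := hu.2 a a' (Sum.Lex.inl_lt_inl_iff.mp hij)
      simp only [Sum.elim_inl]
      omega
    · have h1 := (hu.1 a).2
      have h2 := (hv.1 b').1
      simp only [Sum.elim_inl, Sum.elim_inr]
      omega
    · exact absurd hij Sum.Lex.not_inr_lt_inl
    · have := hv.2 b b' (Sum.Lex.inr_lt_inr_iff.mp hij)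
      simp only [Sum.elim_inr]
      omega

lemma codeg_sum [Nonempty α] [Nonempty β] :
    posetCodeg (α ⊕ₗ β) + 1 = posetCodeg α + posetCodeg β := by
  have hle := codeg_sum_le (α := α) (β := β)
  obtain ⟨hpos, w, hw⟩ := codeg_spec (α := α ⊕ₗ β)
  obtain ⟨a, -, ha⟩ := Finset.exists_mem_eq_sup (Finset.univ : Finset α)
    Finset.univ_nonempty (dn (α := α))
  obtain ⟨b, -, hb⟩ := Finset.exists_mem_eq_sup (Finset.univ : Finset β)
    Finset.univ_nonempty (up (α := β))
  have h1 : (dn a : ℤ) ≤ w (Sum.inl a) :=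
    dn_le_of (fun i => (hw.inlRes.1 i).1) hw.inlRes.2 a
  have h2 : w (Sum.inr b) + (up b : ℤ) ≤ (posetCodeg (α ⊕ₗ β) : ℤ) :=
    up_le_of (fun i => (hw.inrRes.1 i).2) hw.inrRes.2 b
  have h3 : w (Sum.inl a) < w (Sum.inr b) := hw.2 _ _ (Sum.Lex.inl_lt_inr a b)
  have h4 := codeg_eq_dn (α := α)
  have h5 := codeg_eq_up (α := β)
  have h6 := two_le_codeg (α := α)
  have h7 := two_le_codeg (α := β)
  omega

lemma bound_inr [Nonempty α] [Nonempty β] {w : α ⊕ₗ β → ℤ}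
    (hw : OIntPt (α ⊕ₗ β) (posetCodeg (α ⊕ₗ β)) w) (b : β) :
    (posetCodeg α : ℤ) ≤ w (Sum.inr b) := by
  obtain ⟨a, -, ha⟩ := Finset.exists_mem_eq_sup (Finset.univ : Finset α)
    Finset.univ_nonempty (dn (α := α))
  have h1 : (dn a : ℤ) ≤ w (Sum.inl a) :=
    dn_le_of (fun i => (hw.inlRes.1 i).1) hw.inlRes.2 a
  have h3 : w (Sum.inl a) < w (Sum.inr b) := hw.2 _ _ (Sum.Lex.inl_lt_inr a b)
  have h4 := codeg_eq_dn (α := α)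
  omega

lemma bound_inl [Nonempty α] [Nonempty β] {w : α ⊕ₗ β → ℤ}
    (hw : OIntPt (α ⊕ₗ β) (posetCodeg (α ⊕ₗ β)) w) (a : α) :
    w (Sum.inl a) ≤ (posetCodeg α : ℤ) - 1 := by
  obtain ⟨b, -, hb⟩ := Finset.exists_mem_eq_sup (Finset.univ : Finset β)
    Finset.univ_nonempty (up (α := β))
  have h2 : w (Sum.inr b) + (up b : ℤ) ≤ (posetCodeg (α ⊕ₗ β) : ℤ) :=
    up_le_of (fun i => (hw.inrRes.1 i).2) hw.inrRes.2 b
  have h3 : w (Sum.inl a) < w (Sum.inr b) := hw.2 _ _ (Sum.Lex.inl_lt_inr a b)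
  have h5 := codeg_eq_up (α := β)
  have hsum := codeg_sum (α := α) (β := β)
  omega

end SumLemmas

section Main

variable {α β : Type*} [PartialOrder α] [Fintype α] [PartialOrder β] [Fintype β]

lemma forward_left [Nonempty α] [Nonempty β] (hS : PosetLevel (α ⊕ₗ β)) : PosetLevel α := by
  intro k x hx
  obtain ⟨hposβ, v, hv⟩ := codeg_spec (α := β)
  have hsum : posetCodeg (α ⊕ₗ β) + 1 = posetCodeg α + posetCodeg β := codeg_sum
  have hk2 : 2 ≤ k := by have := hx.1 (Classical.arbitrary α); omega
  have hkα : posetCodeg α ≤ k := codeg_le (by omega) hx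
  have h2β := two_le_codeg (α := β)
  have h2α := two_le_codeg (α := α)
  have hx' : OIntPt (α ⊕ₗ β) (k + posetCodeg β - 1)
      (Sum.elim x (fun b => (k : ℤ) - 1 + v b)) := by
    constructor
    · intro i
      rcases i with a | b
      · have := hx.1 a
        simp only [Sum.elim_inl]
        omega
      · have := hv.1 b
        simp only [Sum.elim_inr]
        omega
    · intro i j hij
      rcases i with a | b <;> rcases j with a' | b'
      · have := hx.2 a a' (Sum.Lex.inl_lt_inl_iff.mp hij)
        simp only [Sum.elim_inl]
        omega
      · have h1 := (hx.1 a).2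
        have h2 := (hv.1 b').1
        simp only [Sum.elim_inl, Sum.elim_inr]
        omega
      · exact absurd hij Sum.Lex.not_inr_lt_inl
      · have := hv.2 b b' (Sum.Lex.inr_lt_inr_iff.mp hij)
        simp only [Sum.elim_inr]
        omega
  obtain ⟨y', hy'int, hy'cone⟩ := hS (k + posetCodeg β - 1) _ hx'
  have hcast : (((k + posetCodeg β - 1) - posetCodeg (α ⊕ₗ β) : ℕ) : ℤ)
      = (k : ℤ) - posetCodeg α := by omega
  have hcast2 : ((k - posetCodeg α : ℕ) : ℤ) = (k : ℤ) - posetCodeg α := by omega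
  refine ⟨fun a => max (y' (Sum.inl a)) (x a - ((k : ℤ) - posetCodeg α)), ?_, ?_⟩
  · constructor
    · intro a
      dsimp only
      have h1 := (hy'int.1 (Sum.inl a)).1
      have h2 : y' (Sum.inl a) ≤ (posetCodeg α : ℤ) - 1 := bound_inl hy'int a
      have h3 := (hx.1 a).2
      constructor
      · exact lt_max_of_lt_left h1
      · exact max_lt (by omega) (by omega)
    · intro a a' h
      dsimp only
      have h1 := hy'int.2 _ _ (Sum.Lex.inl_lt_inl_iff.mpr h)
      have h2 := hx.2 a a' h
      exact max_lt_max h1 (by omega)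
  · constructor
    · intro a
      simp only [Pi.sub_apply]
      have hc := hy'cone.1 (Sum.inl a)
      simp only [Pi.sub_apply, Sum.elim_inl, hcast] at hc
      change 0 ≤ x a - y' (Sum.inl a) ∧ x a - y' (Sum.inl a) ≤ _ at hc
      have hml := le_max_left (y' (Sum.inl a)) (x a - ((k : ℤ) - posetCodeg α))
      have hmr := le_max_right (y' (Sum.inl a)) (x a - ((k : ℤ) - posetCodeg α))
      constructor
      · have : max (y' (Sum.inl a)) (x a - ((k : ℤ) - posetCodeg α)) ≤ x a := by
          apply max_le
          · omega
          · omega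
        omega
      · rw [hcast2]
        omega
    · intro a a' h
      simp only [Pi.sub_apply]
      have hm := hy'cone.2 (Sum.inl a) (Sum.inl a') (Sum.Lex.inl_le_inl_iff.mpr h)
      change x a - y' (Sum.inl a) ≤ x a' - y' (Sum.inl a') at hm
      have hml := le_max_left (y' (Sum.inl a)) (x a - ((k : ℤ) - posetCodeg α))
      have hmr := le_max_right (y' (Sum.inl a)) (x a - ((k : ℤ) - posetCodeg α))
      have hbig : max (y' (Sum.inl a')) (x a' - ((k : ℤ) - posetCodeg α)) ≤
          max (y' (Sum.inl a)) (x a - ((k : ℤ) - posetCodeg α)) + (x a' - x a) := by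
        apply max_le
        · omega
        · omega
      omega

lemma forward_right [Nonempty α] [Nonempty β] (hS : PosetLevel (α ⊕ₗ β)) : PosetLevel β := by
  intro k x hx
  obtain ⟨hposα, u, hu⟩ := codeg_spec (α := α)
  have hsum : posetCodeg (α ⊕ₗ β) + 1 = posetCodeg α + posetCodeg β := codeg_sum
  have hk2 : 2 ≤ k := by have := hx.1 (Classical.arbitrary β); omega
  have hkβ : posetCodeg β ≤ k := codeg_le (by omega) hx
  have h2β := two_le_codeg (α := β)
  have h2α := two_le_codeg (α := α)
  have hx' : OIntPt (α ⊕ₗ β) (posetCodeg α + k - 1)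
      (Sum.elim u (fun b => (posetCodeg α : ℤ) - 1 + x b)) := by
    constructor
    · intro i
      rcases i with a | b
      · have := hu.1 a
        simp only [Sum.elim_inl]
        omega
      · have := hx.1 b
        simp only [Sum.elim_inr]
        omega
    · intro i j hij
      rcases i with a | b <;> rcases j with a' | b'
      · have := hu.2 a a' (Sum.Lex.inl_lt_inl_iff.mp hij)
        simp only [Sum.elim_inl]
        omega
      · have h1 := (hu.1 a).2
        have h2 := (hx.1 b').1
        simp only [Sum.elim_inl, Sum.elim_inr]
        omega
      · exact absurd hij Sum.Lex.not_inr_lt_inl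
      · have := hx.2 b b' (Sum.Lex.inr_lt_inr_iff.mp hij)
        simp only [Sum.elim_inr]
        omega
  obtain ⟨y', hy'int, hy'cone⟩ := hS (posetCodeg α + k - 1) _ hx'
  have hcast : (((posetCodeg α + k - 1) - posetCodeg (α ⊕ₗ β) : ℕ) : ℤ)
      = (k : ℤ) - posetCodeg β := by omega
  have hcast2 : ((k - posetCodeg β : ℕ) : ℤ) = (k : ℤ) - posetCodeg β := by omega
  refine ⟨fun b => max (y' (Sum.inr b) - ((posetCodeg α : ℤ) - 1))
      (x b - ((k : ℤ) - posetCodeg β)), ?_, ?_⟩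
  · constructor
    · intro b
      dsimp only
      have h1 : (posetCodeg α : ℤ) ≤ y' (Sum.inr b) := bound_inr hy'int b
      have h2 := (hy'int.1 (Sum.inr b)).2
      have h3 := (hx.1 b).2
      constructor
      · exact lt_max_of_lt_left (by omega)
      · exact max_lt (by omega) (by omega)
    · intro b b' h
      dsimp only
      have h1 : y' (Sum.inr b) < y' (Sum.inr b') :=
        hy'int.2 _ _ (Sum.Lex.inr_lt_inr_iff.mpr h)
      have h2 := hx.2 b b' h
      exact max_lt_max (by omega) (by omega)
  · constructor
    · intro b
      simp only [Pi.sub_apply]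
      have hc := hy'cone.1 (Sum.inr b)
      simp only [Pi.sub_apply, Sum.elim_inr, hcast] at hc
      change 0 ≤ (posetCodeg α : ℤ) - 1 + x b - y' (Sum.inr b) ∧ (posetCodeg α : ℤ) - 1 + x b - y' (Sum.inr b) ≤ _ at hc
      have hml := le_max_left (y' (Sum.inr b) - ((posetCodeg α : ℤ) - 1))
        (x b - ((k : ℤ) - posetCodeg β))
      have hmr := le_max_right (y' (Sum.inr b) - ((posetCodeg α : ℤ) - 1))
        (x b - ((k : ℤ) - posetCodeg β))
      constructor
      · have : max (y' (Sum.inr b) - ((posetCodeg α : ℤ) - 1))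
            (x b - ((k : ℤ) - posetCodeg β)) ≤ x b := by
          apply max_le
          · omega
          · omega
        omega
      · rw [hcast2]
        omega
    · intro b b' h
      simp only [Pi.sub_apply]
      have hm := hy'cone.2 (Sum.inr b) (Sum.inr b') (Sum.Lex.inr_le_inr_iff.mpr h)
      change (posetCodeg α : ℤ) - 1 + x b - y' (Sum.inr b) ≤ (posetCodeg α : ℤ) - 1 + x b' - y' (Sum.inr b') at hm
      have hml := le_max_left (y' (Sum.inr b) - ((posetCodeg α : ℤ) - 1))
        (x b - ((k : ℤ) - posetCodeg β))
      have hmr := le_max_right (y' (Sum.inr b) - ((posetCodeg α : ℤ) - 1))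
        (x b - ((k : ℤ) - posetCodeg β))
      have hbig : max (y' (Sum.inr b') - ((posetCodeg α : ℤ) - 1))
          (x b' - ((k : ℤ) - posetCodeg β)) ≤
          max (y' (Sum.inr b) - ((posetCodeg α : ℤ) - 1))
          (x b - ((k : ℤ) - posetCodeg β)) + (x b' - x b) := by
        apply max_le
        · omega
        · omega
      omega

end Main

section Reverse

variable {α β : Type*} [PartialOrder α] [Fintype α] [PartialOrder β] [Fintype β]

lemma reverse_level [Nonempty α] [Nonempty β] (h1 : PosetLevel α) (h2 : PosetLevel β) :
    PosetLevel (α ⊕ₗ β) := by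
  intro k x hx
  have hsum : posetCodeg (α ⊕ₗ β) + 1 = posetCodeg α + posetCodeg β := codeg_sum
  have h2α := two_le_codeg (α := α)
  have h2β := two_le_codeg (α := β)
  have hkS : posetCodeg (α ⊕ₗ β) ≤ k := by
    apply codeg_le _ hx
    have := hx.1 (Sum.inl (Classical.arbitrary α))
    omega
  obtain ⟨a0, -, ha0⟩ := Finset.exists_max_image (Finset.univ : Finset α)
    (fun a => x (Sum.inl a)) Finset.univ_nonempty
  have hmax : ∀ a : α, x (Sum.inl a) ≤ x (Sum.inl a0) := fun a => ha0 a (Finset.mem_univ a)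
  have hM1 : 1 ≤ x (Sum.inl a0) := (hx.1 (Sum.inl a0)).1
  have hMk : x (Sum.inl a0) ≤ (k : ℤ) - 1 := by
    have := (hx.1 (Sum.inl a0)).2
    omega
  -- interior point of α at height M + 1
  have hxa : OIntPt α ((x (Sum.inl a0)).toNat + 1) (fun a => x (Sum.inl a)) := by
    constructor
    · intro a
      have := (hx.1 (Sum.inl a)).1
      have := hmax a
      dsimp only
      omega
    · intro a a' h
      exact hx.2 _ _ (Sum.Lex.inl_lt_inl_iff.mpr h)
  obtain ⟨yα, hyαi, hyαc⟩ := h1 _ _ hxa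
  have hcαM : posetCodeg α ≤ (x (Sum.inl a0)).toNat + 1 := codeg_le (by omega) hxa
  -- interior point of β at height k - M
  have hlt : ∀ b : β, x (Sum.inl a0) < x (Sum.inr b) :=
    fun b => hx.2 _ _ (Sum.Lex.inl_lt_inr a0 b)
  have hxb : OIntPt β (k - (x (Sum.inl a0)).toNat)
      (fun b => x (Sum.inr b) - x (Sum.inl a0)) := by
    constructor
    · intro b
      have := hlt b
      have := (hx.1 (Sum.inr b)).2
      dsimp only
      omega
    · intro b b' h
      have hbb : x (Sum.inr b) < x (Sum.inr b') :=
        hx.2 _ _ (Sum.Lex.inr_lt_inr_iff.mpr h)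
      dsimp only
      omega
  obtain ⟨yβ, hyβi, hyβc⟩ := h2 _ _ hxb
  have hposkb : 0 < k - (x (Sum.inl a0)).toNat := by omega
  have hcβkb : posetCodeg β ≤ k - (x (Sum.inl a0)).toNat := codeg_le hposkb hxb
  -- cast facts
  have hcastα : (((x (Sum.inl a0)).toNat + 1 - posetCodeg α : ℕ) : ℤ)
      = x (Sum.inl a0) + 1 - posetCodeg α := by omega
  have hcastβ : ((k - (x (Sum.inl a0)).toNat - posetCodeg β : ℕ) : ℤ)
      = (k : ℤ) - x (Sum.inl a0) - posetCodeg β := by omega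
  have hcastS : ((k - posetCodeg (α ⊕ₗ β) : ℕ) : ℤ)
      = (k : ℤ) - posetCodeg (α ⊕ₗ β) := by omega
  refine ⟨Sum.elim yα (fun b => (posetCodeg α : ℤ) - 1 + yβ b), ?_, ?_⟩
  · constructor
    · intro i
      rcases i with a | b
      · have := hyαi.1 a
        simp only [Sum.elim_inl]
        omega
      · have := hyβi.1 b
        simp only [Sum.elim_inr]
        omega
    · intro i j hij
      rcases i with a | b <;> rcases j with a' | b'
      · have := hyαi.2 a a' (Sum.Lex.inl_lt_inl_iff.mp hij)
        simp only [Sum.elim_inl]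
        omega
      · have hu := (hyαi.1 a).2
        have hv := (hyβi.1 b').1
        simp only [Sum.elim_inl, Sum.elim_inr]
        omega
      · exact absurd hij Sum.Lex.not_inr_lt_inl
      · have := hyβi.2 b b' (Sum.Lex.inr_lt_inr_iff.mp hij)
        simp only [Sum.elim_inr]
        omega
  · constructor
    · intro i
      rcases i with a | b
      · have hc := hyαc.1 a
        simp only [Pi.sub_apply, hcastα] at hc
        simp only [Pi.sub_apply, Sum.elim_inl, hcastS]
        change 0 ≤ x (Sum.inl a) - yα a ∧ x (Sum.inl a) - yα a ≤ _
        omega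
      · have hc := hyβc.1 b
        simp only [Pi.sub_apply, hcastβ] at hc
        simp only [Pi.sub_apply, Sum.elim_inr, hcastS]
        change 0 ≤ x (Sum.inr b) - ((posetCodeg α : ℤ) - 1 + yβ b) ∧ x (Sum.inr b) - ((posetCodeg α : ℤ) - 1 + yβ b) ≤ _
        omega
    · intro i j hij
      rcases i with a | b <;> rcases j with a' | b'
      · have hc := hyαc.2 a a' (Sum.Lex.inl_le_inl_iff.mp hij)
        simp only [Pi.sub_apply] at hc
        change x (Sum.inl a) - yα a ≤ x (Sum.inl a') - yα a'
        omega
      · -- inl a ≤ inr b'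
        have hc1 := hyαc.1 a
        simp only [Pi.sub_apply, hcastα] at hc1
        have hc2 := hyβc.1 b'
        simp only [Pi.sub_apply, hcastβ] at hc2
        change x (Sum.inl a) - yα a ≤ x (Sum.inr b') - ((posetCodeg α : ℤ) - 1 + yβ b')
        omega
      · exact absurd hij Sum.Lex.not_inr_le_inl
      · have hc := hyβc.2 b b' (Sum.Lex.inr_le_inr_iff.mp hij)
        simp only [Pi.sub_apply] at hc
        change x (Sum.inr b) - ((posetCodeg α : ℤ) - 1 + yβ b) ≤ x (Sum.inr b') - ((posetCodeg α : ℤ) - 1 + yβ b')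
        omega

end Reverse

section Empty

variable {α β : Type*} [PartialOrder α] [Fintype α] [PartialOrder β] [Fintype β]

lemma oIntPt_extend_left [IsEmpty α] {c : ℕ} {x : β → ℤ} (hx : OIntPt β c x) :
    OIntPt (α ⊕ₗ β) c (Sum.elim (fun _ => (0 : ℤ)) x) := by
  constructor
  · intro i
    rcases i with a | b
    · exact isEmptyElim a
    · simpa using hx.1 b
  · intro i j hij
    rcases i with a | b <;> rcases j with a' | b'
    · exact isEmptyElim a
    · exact isEmptyElim a
    · exact absurd hij Sum.Lex.not_inr_lt_inl
    · simpa using hx.2 b b' (Sum.Lex.inr_lt_inr_iff.mp hij)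

lemma oIntPt_extend_right [IsEmpty β] {c : ℕ} {x : α → ℤ} (hx : OIntPt α c x) :
    OIntPt (α ⊕ₗ β) c (Sum.elim x (fun _ => (0 : ℤ))) := by
  constructor
  · intro i
    rcases i with a | b
    · simpa using hx.1 a
    · exact isEmptyElim b
  · intro i j hij
    rcases i with a | b <;> rcases j with a' | b'
    · simpa using hx.2 a a' (Sum.Lex.inl_lt_inl_iff.mp hij)
    · exact isEmptyElim b'
    · exact isEmptyElim b
    · exact isEmptyElim b

lemma codeg_empty_left [IsEmpty α] : posetCodeg (α ⊕ₗ β) = posetCodeg β := by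
  unfold posetCodeg
  congr 1
  ext c
  constructor
  · rintro ⟨hc, x, hx⟩
    exact ⟨hc, fun b => x (Sum.inr b), hx.inrRes⟩
  · rintro ⟨hc, x, hx⟩
    exact ⟨hc, _, oIntPt_extend_left hx⟩

lemma codeg_empty_right [IsEmpty β] : posetCodeg (α ⊕ₗ β) = posetCodeg α := by
  unfold posetCodeg
  congr 1
  ext c
  constructor
  · rintro ⟨hc, x, hx⟩
    exact ⟨hc, fun a => x (Sum.inl a), hx.inlRes⟩
  · rintro ⟨hc, x, hx⟩
    exact ⟨hc, _, oIntPt_extend_right hx⟩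

lemma level_empty_left [IsEmpty α] : PosetLevel (α ⊕ₗ β) ↔ PosetLevel β := by
  have hc : posetCodeg (α ⊕ₗ β) = posetCodeg β := codeg_empty_left
  constructor
  · intro h k x hx
    obtain ⟨y', hy'i, hy'c⟩ := h k _ (oIntPt_extend_left (α := α) hx)
    refine ⟨fun b => y' (Sum.inr b), ?_, ?_⟩
    · rw [← hc]
      exact hy'i.inrRes
    · constructor
      · intro b
        have := hy'c.1 (Sum.inr b)
        simp only [Pi.sub_apply, Sum.elim_inr, hc] at this
        change 0 ≤ x b - y' (Sum.inr b) ∧ x b - y' (Sum.inr b) ≤ _ at this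
        simpa using this
      · intro b b' hbb
        have := hy'c.2 (Sum.inr b) (Sum.inr b') (Sum.Lex.inr_le_inr_iff.mpr hbb)
        change x b - y' (Sum.inr b) ≤ x b' - y' (Sum.inr b') at this
        simpa using this
  · intro h k x hx
    obtain ⟨y, hyi, hyc⟩ := h k (fun b => x (Sum.inr b)) hx.inrRes
    refine ⟨Sum.elim (fun _ => (0 : ℤ)) y, ?_, ?_⟩
    · rw [hc]
      exact oIntPt_extend_left hyi
    · constructor
      · intro i
        rcases i with a | b
        · exact isEmptyElim a
        · have := hyc.1 b
          simp only [Pi.sub_apply] at this ⊢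
          simp only [Sum.elim_inr, hc]
          exact this
      · intro i j hij
        rcases i with a | b <;> rcases j with a' | b'
        · exact isEmptyElim a
        · exact isEmptyElim a
        · exact absurd hij Sum.Lex.not_inr_le_inl
        · have := hyc.2 b b' (Sum.Lex.inr_le_inr_iff.mp hij)
          simp only [Pi.sub_apply] at this ⊢
          exact this

lemma level_empty_right [IsEmpty β] : PosetLevel (α ⊕ₗ β) ↔ PosetLevel α := by
  have hc : posetCodeg (α ⊕ₗ β) = posetCodeg α := codeg_empty_right
  constructor
  · intro h k x hx
    obtain ⟨y', hy'i, hy'c⟩ := h k _ (oIntPt_extend_right (β := β) hx)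
    refine ⟨fun a => y' (Sum.inl a), ?_, ?_⟩
    · rw [← hc]
      exact hy'i.inlRes
    · constructor
      · intro a
        have := hy'c.1 (Sum.inl a)
        simp only [Pi.sub_apply, Sum.elim_inl, hc] at this
        change 0 ≤ x a - y' (Sum.inl a) ∧ x a - y' (Sum.inl a) ≤ _ at this
        simpa using this
      · intro a a' haa
        have := hy'c.2 (Sum.inl a) (Sum.inl a') (Sum.Lex.inl_le_inl_iff.mpr haa)
        change x a - y' (Sum.inl a) ≤ x a' - y' (Sum.inl a') at this
        simpa using this
  · intro h k x hx
    obtain ⟨y, hyi, hyc⟩ := h k (fun a => x (Sum.inl a)) hx.inlRes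
    refine ⟨Sum.elim y (fun _ => (0 : ℤ)), ?_, ?_⟩
    · rw [hc]
      exact oIntPt_extend_right hyi
    · constructor
      · intro i
        rcases i with a | b
        · have := hyc.1 a
          simp only [Pi.sub_apply] at this ⊢
          simp only [Sum.elim_inl, hc]
          exact this
        · exact isEmptyElim b
      · intro i j hij
        rcases i with a | b <;> rcases j with a' | b'
        · have := hyc.2 a a' (Sum.Lex.inl_le_inl_iff.mp hij)
          simp only [Pi.sub_apply] at this ⊢
          exact this
        · exact isEmptyElim b'
        · exact isEmptyElim b
        · exact isEmptyElim b

end Empty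

/-- The ordinal sum `Π₁ ◁ Π₂` of two finite posets is level iff both `Π₁` and `Π₂`
are level. -/
theorem stmt_10 (α β : Type*) [PartialOrder α] [Fintype α] [PartialOrder β] [Fintype β] :
    PosetLevel (α ⊕ₗ β) ↔ PosetLevel α ∧ PosetLevel β := by
  rcases isEmpty_or_nonempty α with hα | hα
  · constructor
    · intro hS
      exact ⟨level_of_isEmpty, level_empty_left.mp hS⟩
    · rintro ⟨-, h2⟩
      exact level_empty_left.mpr h2
  rcases isEmpty_or_nonempty β with hβ | hβ
  · constructor
    · intro hS
      exact ⟨level_empty_right.mp hS, level_of_isEmpty⟩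
    · rintro ⟨h1, -⟩
      exact level_empty_right.mpr h1
  constructor
  · intro hS
    exact ⟨forward_left hS, forward_right hS⟩
  · rintro ⟨h1, h2⟩
    exact reverse_level h1 h2
end

section
/- If P and Q are alcoved polytopes in ℝ^d, then every lattice point of the Minkowski sum P + Q is a sum of a lattice point of P and a lattice point of Q; i.e., the addition map (P ∩ ℤ^d) × (Q ∩ ℤ^d) → (P+Q) ∩ ℤ^d is surjective. -/
open scoped Pointwise

/-- The linear functionals `x ↦ x i − x j`, `x ↦ x i`, `x ↦ −x j` (corresponding to
`z_i − z_j` with the convention `z_0 = 0`). -/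
def alcFun (ι : Type*) : Set ((ι → ℝ) → ℝ) :=
  {f | (∃ i j : ι, f = fun x => x i - x j) ∨ (∃ i : ι, f = fun x => x i) ∨
       (∃ j : ι, f = fun x => -x j)}

/-- A polytope is alcoved if it is compact and is an intersection of half-spaces of the
form `z_i − z_j ≤ m` with `m ∈ ℤ` (convention `z_0 = 0`). -/
def IsAlcoved {ι : Type*} [Fintype ι] (P : Set (ι → ℝ)) : Prop :=
  IsCompact P ∧ ∃ (F : Set ((ι → ℝ) → ℝ)) (m : ((ι → ℝ) → ℝ) → ℤ),
    F ⊆ alcFun ι ∧ P = {x | ∀ f ∈ F, f x ≤ (m f : ℝ)}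

/-- An integer whose real cast is `< l + 1` has real cast `≤ l`. -/
lemma int_real_le_of_lt_add_one (k l : ℤ) (h : (k : ℝ) < (l : ℝ) + 1) : (k : ℝ) ≤ (l : ℝ) := by
  have : k < l + 1 := by exact_mod_cast h
  exact_mod_cast Int.lt_add_one_iff.mp this

/-- If `P` and `Q` are alcoved polytopes in `ℝ^d`, then every lattice point of the
Minkowski sum `P + Q` is the sum of a lattice point of `P` and a lattice point of `Q`. -/
theorem stmt_12 {ι : Type*} [Fintype ι] (P Q : Set (ι → ℝ))
    (hP : IsAlcoved P) (hQ : IsAlcoved Q) (z : ι → ℤ)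
    (hz : (fun i => (z i : ℝ)) ∈ P + Q) :
    ∃ p q : ι → ℤ, (fun i => (p i : ℝ)) ∈ P ∧ (fun i => (q i : ℝ)) ∈ Q ∧ p + q = z := by
  obtain ⟨a, ha, b, hb, hab⟩ := hz
  obtain ⟨-, F, m, hF, hPeq⟩ := hP
  obtain ⟨-, G, n, hG, hQeq⟩ := hQ
  have hzab : ∀ i, a i + b i = (z i : ℝ) := fun i => congrFun hab i
  refine ⟨fun i => ⌈a i⌉, fun i => z i - ⌈a i⌉, ?_, ?_, by funext i; simp⟩
  · -- the rounded point is in P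
    rw [hPeq] at ha ⊢
    intro f hf
    have haf := ha f hf
    rcases hF hf with ⟨i, j, rfl⟩ | ⟨i, rfl⟩ | ⟨j, rfl⟩
    · simp only at haf ⊢
      have h1 : (⌈a i⌉ : ℝ) < a i + 1 := Int.ceil_lt_add_one _
      have h2 : (a j : ℝ) ≤ ⌈a j⌉ := Int.le_ceil _
      have key := int_real_le_of_lt_add_one (⌈a i⌉ - ⌈a j⌉) (m _)
        (by push_cast; linarith)
      push_cast at key
      linarith
    · simp only at haf ⊢
      exact_mod_cast Int.ceil_le.mpr (by exact_mod_cast haf)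
    · simp only at haf ⊢
      have h2 : (a j : ℝ) ≤ ⌈a j⌉ := Int.le_ceil _
      linarith
  · -- the complementary point is in Q
    rw [hQeq] at hb ⊢
    intro g hg
    have hbg := hb g hg
    rcases hG hg with ⟨i, j, rfl⟩ | ⟨i, rfl⟩ | ⟨j, rfl⟩
    · simp only at hbg ⊢
      have h1 : (⌈a j⌉ : ℝ) < a j + 1 := Int.ceil_lt_add_one _
      have h2 : (a i : ℝ) ≤ ⌈a i⌉ := Int.le_ceil _
      have e1 := hzab i
      have e2 := hzab j
      have key := int_real_le_of_lt_add_one ((z i - ⌈a i⌉) - (z j - ⌈a j⌉)) (n _)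
        (by push_cast; linarith)
      push_cast at key
      push_cast
      linarith
    · simp only at hbg ⊢
      have h2 : (a i : ℝ) ≤ ⌈a i⌉ := Int.le_ceil _
      have e1 := hzab i
      push_cast
      linarith
    · simp only at hbg ⊢
      have h1 : (⌈a j⌉ : ℝ) < a j + 1 := Int.ceil_lt_add_one _
      have e2 := hzab j
      have key := int_real_le_of_lt_add_one (-(z j - ⌈a j⌉)) (n _)
        (by push_cast; linarith)
      push_cast at key
      push_cast
      linarith
end

section
/- Let P ⊂ ℝ^d be an alcoved polytope with r = codeg(P). Then P is level if and only if for every integer k ≥ r one has (kP)^{(1)} = (rP)^{(1)} + (k−r)P (Minkowski sum). -/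
open scoped Pointwise

/-- The set of positive integers `c` such that `cP` contains an interior lattice
point; its least element is the codegree of `P`. -/
def codegSet {ι : Type*} [Fintype ι] (P : Set (ι → ℝ)) : Set ℕ :=
  {c : ℕ | 0 < c ∧ ∃ z : ι → ℤ, (fun i => (z i : ℝ)) ∈ interior ((c : ℝ) • P)}

/-- `P` is level (with codegree `r`): every interior lattice point of the cone over `P`
at height `k ≥ r` decomposes as an interior lattice point at height `r` plus a lattice
point of the cone at height `k − r`. -/
def IsLevel {ι : Type*} [Fintype ι] (P : Set (ι → ℝ)) (r : ℕ) : Prop :=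
  ∀ (k : ℕ) (z : ι → ℤ), r ≤ k → (fun i => (z i : ℝ)) ∈ interior ((k : ℝ) • P) →
    ∃ y w : ι → ℤ, (fun i => (y i : ℝ)) ∈ interior ((r : ℝ) • P) ∧
      (fun i => (w i : ℝ)) ∈ (((k - r : ℕ) : ℝ)) • P ∧ z = y + w

/-- `(mP)^{(1)}`: the convex hull of the interior lattice points of `mP`. -/
noncomputable def intHull {ι : Type*} [Fintype ι] (P : Set (ι → ℝ)) (m : ℕ) :
    Set (ι → ℝ) :=
  convexHull ℝ {x | x ∈ interior ((m : ℝ) • P) ∧ ∃ z : ι → ℤ, x = fun i => (z i : ℝ)}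

section AlcHelpers
set_option linter.unusedSectionVars false
set_option linter.unusedVariables false
set_option maxHeartbeats 1000000
variable {ι : Type*} [Fintype ι]

set_option linter.unusedSectionVars false
variable {ι : Type*} [Fintype ι]

lemma alc_linear {f : (ι → ℝ) → ℝ} (hf : f ∈ alcFun ι) : IsLinearMap ℝ f := by
  rcases hf with ⟨i, j, rfl⟩ | ⟨i, rfl⟩ | ⟨j, rfl⟩ <;>
    exact ⟨fun x y => by simp only [Pi.add_apply]; try ring,
           fun c x => by simp only [Pi.smul_apply, smul_eq_mul]; try ring⟩

lemma alc_continuous {f : (ι → ℝ) → ℝ} (hf : f ∈ alcFun ι) : Continuous f := by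
  rcases hf with ⟨i, j, rfl⟩ | ⟨i, rfl⟩ | ⟨j, rfl⟩
  · exact (continuous_apply i).sub (continuous_apply j)
  · exact continuous_apply i
  · exact (continuous_apply j).neg

lemma alc_int {f : (ι → ℝ) → ℝ} (hf : f ∈ alcFun ι) (z : ι → ℤ) :
    ∃ n : ℤ, f (fun i => (z i : ℝ)) = (n : ℝ) := by
  rcases hf with ⟨i, j, rfl⟩ | ⟨i, rfl⟩ | ⟨j, rfl⟩
  · exact ⟨z i - z j, by push_cast; ring⟩
  · exact ⟨z i, rfl⟩
  · exact ⟨-z j, by push_cast; ring⟩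

lemma alc_exists_one {f : (ι → ℝ) → ℝ} (hf : f ∈ alcFun ι) (h0 : f ≠ 0) :
    ∃ v : ι → ℝ, f v = 1 := by
  classical
  rcases hf with ⟨i, j, rfl⟩ | ⟨i, rfl⟩ | ⟨j, rfl⟩
  · by_cases hij : i = j
    · exact absurd (funext fun x => by simp [hij]) h0
    · refine ⟨Pi.single i 1, ?_⟩
      simp only [Pi.single_eq_same, Pi.single_eq_of_ne (Ne.symm hij)]
      ring
  · exact ⟨Pi.single i 1, by simp⟩
  · exact ⟨Pi.single j (-1), by simp⟩

lemma alc_finite : (alcFun ι).Finite := by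
  have h1 : (alcFun ι) ⊆
      ((fun p : ι × ι => fun x : ι → ℝ => x p.1 - x p.2) '' Set.univ) ∪
      ((fun i : ι => fun x : ι → ℝ => x i) '' Set.univ) ∪
      ((fun j : ι => fun x : ι → ℝ => -x j) '' Set.univ) := by
    rintro f (⟨i, j, rfl⟩ | ⟨i, rfl⟩ | ⟨j, rfl⟩)
    · exact Or.inl (Or.inl ⟨(i, j), trivial, rfl⟩)
    · exact Or.inl (Or.inr ⟨i, trivial, rfl⟩)
    · exact Or.inr ⟨j, trivial, rfl⟩
  exact Set.Finite.subset (((Set.finite_univ.image _).union (Set.finite_univ.image _)).union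
    (Set.finite_univ.image _)) h1

lemma alc_ceil_le {f : (ι → ℝ) → ℝ} (hf : f ∈ alcFun ι) (x : ι → ℝ) (n : ℤ)
    (hx : f x ≤ (n : ℝ)) : f (fun i => ((⌈x i⌉ : ℤ) : ℝ)) ≤ (n : ℝ) := by
  rcases hf with ⟨i, j, rfl⟩ | ⟨i, rfl⟩ | ⟨j, rfl⟩ <;> simp only at hx ⊢
  · have h1 : ⌈x i⌉ ≤ ⌈x j + (n : ℝ)⌉ := Int.ceil_le_ceil (by linarith)
    rw [Int.ceil_add_intCast] at h1
    have h2 : ((⌈x i⌉ : ℤ) : ℝ) ≤ ((⌈x j⌉ + n : ℤ) : ℝ) := by exact_mod_cast h1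
    push_cast at h2
    linarith
  · exact_mod_cast Int.ceil_le.2 (by exact_mod_cast hx)
  · have := Int.le_ceil (x j)
    linarith

lemma alc_ceil_gt {f : (ι → ℝ) → ℝ} (hf : f ∈ alcFun ι) (x : ι → ℝ) :
    f x - 1 < f (fun i => ((⌈x i⌉ : ℤ) : ℝ)) := by
  rcases hf with ⟨i, j, rfl⟩ | ⟨i, rfl⟩ | ⟨j, rfl⟩ <;> simp only
  · have h1 := Int.le_ceil (x i)
    have h2 := Int.ceil_lt_add_one (x j)
    linarith
  · have := Int.le_ceil (x i); linarith
  · have := Int.ceil_lt_add_one (x j); linarith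
def Dset (F : Set ((ι → ℝ) → ℝ)) (b : ((ι → ℝ) → ℝ) → ℝ) : Set (ι → ℝ) :=
  {x | ∀ f ∈ F, f x ≤ b f}

lemma Dset_convex {F : Set ((ι → ℝ) → ℝ)} (hF : F ⊆ alcFun ι) (b : ((ι → ℝ) → ℝ) → ℝ) :
    Convex ℝ (Dset F b) := by
  intro x hx y hy a c ha hc hac
  intro f hf
  have hl := alc_linear (hF hf)
  have : f (a • x + c • y) = a * f x + c * f y := by
    rw [hl.map_add, hl.map_smul, hl.map_smul]; simp [smul_eq_mul]
  rw [this]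
  calc a * f x + c * f y ≤ a * b f + c * b f := by
        have := hx f hf; have := hy f hf; nlinarith
    _ = b f := by rw [← add_mul, hac, one_mul]

lemma Dset_smul {F : Set ((ι → ℝ) → ℝ)} (hF : F ⊆ alcFun ι) (b : ((ι → ℝ) → ℝ) → ℝ)
    {c : ℝ} (hc : 0 < c) : c • Dset F b = Dset F (fun f => c * b f) := by
  ext x
  rw [Set.mem_smul_set_iff_inv_smul_mem₀ (ne_of_gt hc)]
  constructor
  · intro h f hf
    have hl := alc_linear (hF hf)
    have h2 := h f hf
    rw [hl.map_smul] at h2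
    simp only [smul_eq_mul] at h2
    have := mul_le_mul_of_nonneg_left h2 (le_of_lt hc)
    rw [← mul_assoc, mul_inv_cancel₀ (ne_of_gt hc), one_mul] at this
    exact this
  · intro h f hf
    have hl := alc_linear (hF hf)
    rw [hl.map_smul]
    simp only [smul_eq_mul]
    have h2 := h f hf
    have := mul_le_mul_of_nonneg_left h2 (le_of_lt (inv_pos.2 hc))
    rw [← mul_assoc, inv_mul_cancel₀ (ne_of_gt hc), one_mul] at this
    exact this

lemma Dset_interior {F : Set ((ι → ℝ) → ℝ)} (hF : F ⊆ alcFun ι) (hFfin : F.Finite)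
    (h0 : ∀ f ∈ F, f ≠ 0) (b : ((ι → ℝ) → ℝ) → ℝ) :
    interior (Dset F b) = {x | ∀ f ∈ F, f x < b f} := by
  apply Set.Subset.antisymm
  · intro x hx f hf
    by_contra hcon
    push_neg at hcon
    have hxD : x ∈ Dset F b := interior_subset hx
    have hfx : f x = b f := le_antisymm (hxD f hf) hcon
    obtain ⟨v, hv⟩ := alc_exists_one (hF hf) (h0 f hf)
    obtain ⟨ε, hε, hball⟩ := Metric.isOpen_iff.1 isOpen_interior x hx
    set t : ℝ := ε / (2 * (‖v‖ + 1)) with ht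
    have hnorm : (0:ℝ) < ‖v‖ + 1 := by positivity
    have htpos : 0 < t := by positivity
    have hmem : x + t • v ∈ Metric.ball x ε := by
      rw [Metric.mem_ball, dist_eq_norm]
      have : x + t • v - x = t • v := by ring_nf -- might fail
      rw [this, norm_smul]
      simp only [Real.norm_eq_abs, abs_of_pos htpos]
      calc t * ‖v‖ < t * (‖v‖ + 1) := by nlinarith
        _ = ε / 2 := by rw [ht]; field_simp
        _ < ε := by linarith
    have hmem2 : x + t • v ∈ Dset F b := interior_subset (hball hmem)
    have hl := alc_linear (hF hf)
    have : f (x + t • v) = f x + t := by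
      rw [hl.map_add, hl.map_smul, hv]; simp [smul_eq_mul]
    have := hmem2 f hf
    rw [‹f (x + t • v) = f x + t›, hfx] at this
    linarith
  · have hopen : IsOpen {x : ι → ℝ | ∀ f ∈ F, f x < b f} := by
      have : {x : ι → ℝ | ∀ f ∈ F, f x < b f} = ⋂ f ∈ F, {x | f x < b f} := by
        ext x; simp
      rw [this]
      exact hFfin.isOpen_biInter (fun f hf =>
        isOpen_lt (alc_continuous (hF hf)) continuous_const)
    apply interior_maximal ?_ hopen
    intro y hy f hf
    exact le_of_lt (hy f hf)
noncomputable def frs (x : ι → ℝ) : Finset ℝ :=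
  (Finset.univ.image fun i : ι => Int.fract (x i)).filter (fun r => 0 < r)

lemma mem_frs {x : ι → ℝ} {y : ℝ} : y ∈ frs x ↔ (∃ i, Int.fract (x i) = y) ∧ 0 < y := by
  simp [frs]

lemma int_le_sub_one {D N : ℤ} (h : (D:ℝ) < (N:ℝ)) : (D:ℝ) ≤ (N:ℝ) - 1 := by
  have h1 : D < N := by exact_mod_cast h
  have h2 : D ≤ N - 1 := by omega
  calc (D:ℝ) ≤ ((N - 1 : ℤ) : ℝ) := by exact_mod_cast h2
    _ = (N:ℝ) - 1 := by push_cast; ring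

lemma lattice_of_frs_empty {x : ι → ℝ} (h : frs x = ∅) :
    ∃ z : ι → ℤ, x = fun i => (z i : ℝ) := by
  refine ⟨fun i => ⌊x i⌋, funext fun i => ?_⟩
  have h1 : Int.fract (x i) = 0 := by
    by_contra hcon
    have h2 : 0 < Int.fract (x i) := lt_of_le_of_ne (Int.fract_nonneg _) (Ne.symm hcon)
    have : Int.fract (x i) ∈ frs x := mem_frs.2 ⟨⟨i, rfl⟩, h2⟩
    rw [h] at this
    exact absurd this (Finset.notMem_empty _)
  have h2 := Int.floor_add_fract (x i)
  simp only
  linarith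

lemma latticeHull {F : Set ((ι → ℝ) → ℝ)} (hF : F ⊆ alcFun ι) (b : ((ι → ℝ) → ℝ) → ℝ)
    (hb : ∀ f ∈ F, ∃ n : ℤ, b f = (n : ℝ)) :
    ∀ x ∈ Dset F b, x ∈ convexHull ℝ
      {y | y ∈ Dset F b ∧ ∃ z : ι → ℤ, y = fun i => (z i : ℝ)} := by
  classical
  suffices H : ∀ (n : ℕ) (x : ι → ℝ), (frs x).card ≤ n → x ∈ Dset F b →
      x ∈ convexHull ℝ {y | y ∈ Dset F b ∧ ∃ z : ι → ℤ, y = fun i => (z i : ℝ)} by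
    exact fun x hx => H (frs x).card x le_rfl hx
  intro n
  induction n with
  | zero =>
    intro x hcard hx
    obtain ⟨z, rfl⟩ := lattice_of_frs_empty (Finset.card_eq_zero.1 (Nat.le_zero.1 hcard))
    exact subset_convexHull ℝ _ ⟨hx, z, rfl⟩
  | succ n ih =>
    intro x hcard hx
    by_cases hne : (frs x).Nonempty
    case neg =>
      obtain ⟨z, rfl⟩ := lattice_of_frs_empty (Finset.not_nonempty_iff_eq_empty.1 hne)
      exact subset_convexHull ℝ _ ⟨hx, z, rfl⟩
    set g : ι → ℝ := fun i => Int.fract (x i) with hgdef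
    have hg0 : ∀ i, 0 ≤ g i := fun i => Int.fract_nonneg _
    have hg1 : ∀ i, g i < 1 := fun i => Int.fract_lt_one _
    have hfl : ∀ i, x i = (⌊x i⌋ : ℝ) + g i := fun i => (Int.floor_add_fract (x i)).symm ▸ rfl
    have hmemfrs : ∀ i, 0 < g i → g i ∈ frs x := fun i h => mem_frs.2 ⟨⟨i, rfl⟩, h⟩
    set c := (frs x).max' hne with hcdef
    have hcmem : c ∈ frs x := (frs x).max'_mem hne
    have hc0 : 0 < c := (mem_frs.1 hcmem).2
    have hc1 : c < 1 := by
      obtain ⟨⟨i, hi⟩, -⟩ := mem_frs.1 hcmem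
      rw [← hi]; exact hg1 i
    have hcmax : ∀ y ∈ frs x, y ≤ c := fun y hy => (frs x).le_max' y hy
    set c' : ℝ := if h : ((frs x).erase c).Nonempty then ((frs x).erase c).max' h else 0
      with hc'def
    have hc'0 : 0 ≤ c' := by
      rw [hc'def]
      split
      case isTrue h =>
        have := ((frs x).erase c).max'_mem h
        exact le_of_lt (mem_frs.1 (Finset.mem_of_mem_erase this)).2
      case isFalse h => exact le_refl 0
    have hc'c : c' < c := by
      rw [hc'def]
      split
      case isTrue h =>
        have hmem := ((frs x).erase c).max'_mem h
        exact lt_of_le_of_ne (hcmax _ (Finset.mem_of_mem_erase hmem))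
          (Finset.ne_of_mem_erase hmem)
      case isFalse h => exact hc0
    have hc'1 : c' < 1 := lt_trans hc'c hc1
    have hle : ∀ i, g i ≠ c → g i ≤ c' := by
      intro i h
      rcases lt_or_eq_of_le (hg0 i) with h2 | h2
      · have hmem : g i ∈ (frs x).erase c := Finset.mem_erase.2 ⟨h, hmemfrs i h2⟩
        have hnem : ((frs x).erase c).Nonempty := ⟨_, hmem⟩
        rw [hc'def, dif_pos hnem]
        exact ((frs x).erase c).le_max' _ hmem
      · rw [← h2]; exact hc'0
    set xp : ι → ℝ := fun i => if g i = c then x i + (1 - c) else x i with hxpdef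
    set xm : ι → ℝ := fun i => if g i = c then x i - (c - c') else x i with hxmdef
    have hxp_eq : ∀ i, g i = c → xp i = ((⌊x i⌋ + 1 : ℤ) : ℝ) := by
      intro i h
      simp only [hxpdef, if_pos h]
      have := hfl i
      push_cast
      linarith [h]
    have hfrp : ∀ i, Int.fract (xp i) = if g i = c then 0 else g i := by
      intro i
      by_cases h : g i = c
      · rw [if_pos h, hxp_eq i h, Int.fract_intCast]
      · rw [if_neg h]
        simp only [hxpdef, if_neg h]
        rfl
    have hxm_eq : ∀ i, g i = c → xm i = (⌊x i⌋ : ℝ) + c' := by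
      intro i h
      simp only [hxmdef, if_pos h]
      have := hfl i
      linarith [h]
    have hfrm : ∀ i, Int.fract (xm i) = if g i = c then c' else g i := by
      intro i
      by_cases h : g i = c
      · rw [if_pos h, hxm_eq i h, Int.fract_intCast_add, Int.fract_eq_self.2 ⟨hc'0, hc'1⟩]
      · rw [if_neg h]
        simp only [hxmdef, if_neg h]
        rfl
    -- card bounds
    have hsubp : frs xp ⊆ (frs x).erase c := by
      intro y hy
      obtain ⟨⟨i, hi⟩, hy0⟩ := mem_frs.1 hy
      rw [hfrp i] at hi
      by_cases h : g i = c
      · rw [if_pos h] at hi; rw [← hi] at hy0; exact absurd hy0 (lt_irrefl 0)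
      · rw [if_neg h] at hi
        subst hi
        exact Finset.mem_erase.2 ⟨h, hmemfrs i hy0⟩
    have hsubm : frs xm ⊆ (frs x).erase c := by
      intro y hy
      obtain ⟨⟨i, hi⟩, hy0⟩ := mem_frs.1 hy
      rw [hfrm i] at hi
      by_cases h : g i = c
      · rw [if_pos h] at hi
        subst hi
        have hnem : ((frs x).erase c).Nonempty := by
          by_contra hcon
          rw [hc'def, dif_neg hcon] at hy0
          exact absurd hy0 (lt_irrefl 0)
        rw [hc'def, dif_pos hnem]
        exact ((frs x).erase c).max'_mem hnem
      · rw [if_neg h] at hi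
        subst hi
        exact Finset.mem_erase.2 ⟨h, hmemfrs i hy0⟩
    have hcarde : ((frs x).erase c).card ≤ n := by
      rw [Finset.card_erase_of_mem hcmem]
      have := Finset.card_pos.2 hne
      omega
    have hcardp : (frs xp).card ≤ n := le_trans (Finset.card_le_card hsubp) hcarde
    have hcardm : (frs xm).card ≤ n := le_trans (Finset.card_le_card hsubm) hcarde
    -- constraints
    have hDp : xp ∈ Dset F b := by
      intro f hf
      obtain ⟨N, hN⟩ := hb f hf
      have hxf := hx f hf
      rw [hN] at hxf ⊢
      rcases hF hf with ⟨i, j, rfl⟩ | ⟨i, rfl⟩ | ⟨j, rfl⟩ <;> simp only at hxf ⊢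
      · by_cases hi : g i = c <;> by_cases hj : g j = c
        · simp only [hxpdef, if_pos hi, if_pos hj]; linarith
        · simp only [hxpdef, if_pos hi, if_neg hj]
          have hgj := hle j hj
          have hD : ((⌊x i⌋ - ⌊x j⌋ : ℤ) : ℝ) ≤ (N:ℝ) - 1 := by
            apply int_le_sub_one
            push_cast
            have h1 := hfl i; have h2 := hfl j
            linarith [hi]
          push_cast at hD
          have h1 := hfl i; have h2 := hfl j
          linarith [hi, hg0 j]
        · simp only [hxpdef, if_neg hi, if_pos hj]; linarith
        · simp only [hxpdef, if_neg hi, if_neg hj]; linarith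
      · by_cases hi : g i = c
        · rw [hxp_eq i hi]
          have hD : ((⌊x i⌋ : ℤ) : ℝ) ≤ (N:ℝ) - 1 := by
            apply int_le_sub_one
            have h1 := hfl i
            linarith [hi]
          push_cast at hD ⊢
          linarith
        · simp only [hxpdef, if_neg hi]; exact hxf
      · by_cases hj : g j = c
        · simp only [hxpdef, if_pos hj]; linarith
        · simp only [hxpdef, if_neg hj]; exact hxf
    have hDm : xm ∈ Dset F b := by
      intro f hf
      obtain ⟨N, hN⟩ := hb f hf
      have hxf := hx f hf
      rw [hN] at hxf ⊢
      rcases hF hf with ⟨i, j, rfl⟩ | ⟨i, rfl⟩ | ⟨j, rfl⟩ <;> simp only at hxf ⊢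
      · by_cases hi : g i = c <;> by_cases hj : g j = c
        · simp only [hxmdef, if_pos hi, if_pos hj]; linarith
        · simp only [hxmdef, if_pos hi, if_neg hj]; linarith
        · simp only [hxmdef, if_neg hi, if_pos hj]
          have hgi := hle i hi
          have hD : ((⌊x i⌋ - ⌊x j⌋ : ℤ) : ℝ) ≤ (N:ℝ) := by
            have : ((⌊x i⌋ - ⌊x j⌋ : ℤ) : ℝ) < (N:ℝ) + 1 := by
              push_cast
              have h1 := hfl i; have h2 := hfl j
              linarith [hj, hg0 i, hc1]
            have h1 : (⌊x i⌋ - ⌊x j⌋ : ℤ) < N + 1 := by exact_mod_cast this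
            have h2 : (⌊x i⌋ - ⌊x j⌋ : ℤ) ≤ N := by omega
            exact_mod_cast h2
          push_cast at hD
          have h1 := hfl i; have h2 := hfl j
          linarith [hj]
        · simp only [hxmdef, if_neg hi, if_neg hj]; linarith
      · by_cases hi : g i = c
        · simp only [hxmdef, if_pos hi]; linarith
        · simp only [hxmdef, if_neg hi]; exact hxf
      · by_cases hj : g j = c
        · simp only [hxmdef, if_pos hj]
          have hD : ((-⌊x j⌋ : ℤ) : ℝ) ≤ (N:ℝ) := by
            have : ((-⌊x j⌋ : ℤ) : ℝ) < (N:ℝ) + 1 := by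
              push_cast
              have h2 := hfl j
              linarith [hj, hc1]
            have h1 : (-⌊x j⌋ : ℤ) < N + 1 := by exact_mod_cast this
            have h2 : (-⌊x j⌋ : ℤ) ≤ N := by omega
            exact_mod_cast h2
          push_cast at hD
          have h2 := hfl j
          linarith [hj]
        · simp only [hxmdef, if_neg hj]; exact hxf
    -- convex combination
    have hxpmem := ih xp hcardp hDp
    have hxmmem := ih xm hcardm hDm
    set lam : ℝ := (c - c') / (1 - c') with hlam
    have hden : (0:ℝ) < 1 - c' := by linarith
    have hlam0 : 0 ≤ lam := div_nonneg (by linarith) (le_of_lt hden)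
    have hlam1 : lam ≤ 1 := by
      rw [hlam, div_le_one hden]; linarith
    have hcomb : x = lam • xp + (1 - lam) • xm := by
      funext i
      simp only [Pi.add_apply, Pi.smul_apply, smul_eq_mul]
      by_cases h : g i = c
      · simp only [hxpdef, hxmdef, if_pos h]
        rw [hlam]
        field_simp
        ring
      · simp only [hxpdef, hxmdef, if_neg h]
        ring
    rw [hcomb]
    exact (convex_convexHull ℝ _) hxpmem hxmmem hlam0 (by linarith) (by ring)
end AlcHelpers

set_option maxHeartbeats 1000000 in
/-- An alcoved polytope `P` with codegree `r` is level iff for every `k ≥ r` one has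
`(kP)^{(1)} = (rP)^{(1)} + (k − r)P`. -/
theorem stmt_13 {ι : Type*} [Fintype ι] (P : Set (ι → ℝ)) (hP : IsAlcoved P)
    (r : ℕ) (hr : IsLeast (codegSet P) r) :
    IsLevel P r ↔ ∀ k : ℕ, r ≤ k →
      intHull P k = intHull P r + (((k - r : ℕ) : ℝ)) • P := by
  classical
  obtain ⟨hcomp, F, mm, hFsub, hPdef⟩ := hP
  obtain ⟨⟨hr0, z0, hz0⟩, hrleast⟩ := hr
  have hPne : P.Nonempty := by
    have h1 : ((r : ℝ) • P).Nonempty := ⟨_, interior_subset hz0⟩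
    obtain ⟨w, hw⟩ := h1
    obtain ⟨x, hx, -⟩ := Set.mem_smul_set.1 hw
    exact ⟨x, hx⟩
  set F' : Set ((ι → ℝ) → ℝ) := {f ∈ F | f ≠ 0} with hF'def
  have hF' : F' ⊆ alcFun ι := fun f hf => hFsub hf.1
  have h0' : ∀ f ∈ F', f ≠ 0 := fun f hf => hf.2
  have hF'fin : F'.Finite := alc_finite.subset hF'
  have hPD : P = Dset F' (fun f => (mm f : ℝ)) := by
    rw [hPdef]
    ext x
    constructor
    · exact fun h f hf => h f hf.1
    · intro h f hf
      by_cases h0 : f = 0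
      · obtain ⟨p, hp⟩ := hPne
        have hp2 : f p ≤ (mm f : ℝ) := by rw [hPdef] at hp; exact hp f hf
        rw [h0] at hp2 ⊢
        simpa using hp2
      · exact h f ⟨hf, h0⟩
  have hconvP : Convex ℝ P := by rw [hPD]; exact Dset_convex hF' _
  have hscale : ∀ k : ℕ, 0 < k →
      ((k : ℝ) • P) = Dset F' (fun f => (k : ℝ) * (mm f : ℝ)) := by
    intro k hk
    rw [hPD, Dset_smul hF' _ (by exact_mod_cast hk : (0:ℝ) < (k:ℝ))]
  have hint : ∀ k : ℕ, 0 < k →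
      interior ((k : ℝ) • P) = {x | ∀ f ∈ F', f x < (k : ℝ) * (mm f : ℝ)} := by
    intro k hk
    rw [hscale k hk, Dset_interior hF' hF'fin h0']
  have hlat : ∀ (k : ℕ), 0 < k → ∀ z : ι → ℤ,
      ((fun i => (z i : ℝ)) ∈ interior ((k : ℝ) • P) ↔
        ∀ f ∈ F', f (fun i => (z i : ℝ)) ≤ (k : ℝ) * (mm f : ℝ) - 1) := by
    intro k hk z
    rw [hint k hk]
    simp only [Set.mem_setOf_eq]
    have key : ∀ f ∈ F', (f (fun i => (z i : ℝ)) < (k : ℝ) * (mm f : ℝ) ↔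
        f (fun i => (z i : ℝ)) ≤ (k : ℝ) * (mm f : ℝ) - 1) := by
      intro f hf
      obtain ⟨n, hn⟩ := alc_int (hF' hf) z
      rw [hn]
      have hKc : (k : ℝ) * (mm f : ℝ) = (((k : ℤ) * mm f : ℤ) : ℝ) := by push_cast; ring
      rw [hKc]
      constructor
      · intro h
        have h1 : n < (k : ℤ) * mm f := by exact_mod_cast h
        have h2 : n ≤ (k : ℤ) * mm f - 1 := by omega
        calc (n:ℝ) ≤ (((k : ℤ) * mm f - 1 : ℤ) : ℝ) := by exact_mod_cast h2
          _ = (((k : ℤ) * mm f : ℤ) : ℝ) - 1 := by push_cast; ring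
      · intro h; linarith
    constructor
    · intro h f hf; exact (key f hf).1 (h f hf)
    · intro h f hf; exact (key f hf).2 (h f hf)
  -- the interior-lattice-point sets
  have hSQ : ∀ k : ℕ, 0 < k →
      {x : ι → ℝ | x ∈ interior ((k : ℝ) • P) ∧ ∃ z : ι → ℤ, x = fun i => (z i : ℝ)} ⊆
        Dset F' (fun f => (k : ℝ) * (mm f : ℝ) - 1) := by
    rintro k hk x ⟨hxint, z, rfl⟩
    exact fun f hf => (hlat k hk z).1 hxint f hf
  have hQS : ∀ k : ℕ, 0 < k → ∀ y ∈ Dset F' (fun f => (k : ℝ) * (mm f : ℝ) - 1),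
      (∃ z : ι → ℤ, y = fun i => (z i : ℝ)) →
      y ∈ {x : ι → ℝ | x ∈ interior ((k : ℝ) • P) ∧ ∃ z : ι → ℤ, x = fun i => (z i : ℝ)} := by
    rintro k hk y hy ⟨z, rfl⟩
    exact ⟨(hlat k hk z).2 (fun f hf => hy f hf), z, rfl⟩
  have hhull : ∀ k : ℕ, 0 < k → intHull P k ⊆ Dset F' (fun f => (k : ℝ) * (mm f : ℝ) - 1) :=
    fun k hk => convexHull_min (hSQ k hk) (Dset_convex hF' _)
  have hbint : ∀ k : ℕ, ∀ f ∈ F', ∃ n : ℤ, (k : ℝ) * (mm f : ℝ) - 1 = (n : ℝ) :=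
    fun k f _ => ⟨(k : ℤ) * mm f - 1, by push_cast; ring⟩
  constructor
  · -- IsLevel → equality
    intro hlev k hk
    have hk0 : 0 < k := lt_of_lt_of_le hr0 hk
    apply Set.Subset.antisymm
    · apply convexHull_min
      · rintro x ⟨hxint, z, rfl⟩
        obtain ⟨y, w, hy, hw, hzyw⟩ := hlev k z hk hxint
        have hsplit : (fun i => (z i : ℝ)) = (fun i => (y i : ℝ)) + (fun i => (w i : ℝ)) := by
          funext i
          rw [hzyw]
          simp only [Pi.add_apply]
          push_cast
          ring
        rw [hsplit]
        exact Set.add_mem_add (subset_convexHull ℝ _ ⟨hy, y, rfl⟩) hw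
      · exact ((convex_convexHull ℝ _).add (hconvP.smul _))
    · intro x hx
      obtain ⟨a, ha, w, hw, rfl⟩ := Set.mem_add.1 hx
      have haQ : a ∈ Dset F' (fun f => (r : ℝ) * (mm f : ℝ) - 1) := hhull r hr0 ha
      have hwD : ∀ f ∈ F', f w ≤ ((k - r : ℕ) : ℝ) * (mm f : ℝ) := by
        intro f hf
        rcases eq_or_lt_of_le hk with rfl | hlt
        · have h00 : ((r - r : ℕ) : ℝ) = 0 := by simp
          rw [h00] at hw ⊢
          rw [Set.zero_smul_set hPne] at hw
          have hw0 : w = 0 := hw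
          rw [hw0, (alc_linear (hF' hf)).map_zero]
          simp
        · rw [hscale (k - r) (by omega)] at hw
          exact hw f hf
      have hsumQ : a + w ∈ Dset F' (fun f => (k : ℝ) * (mm f : ℝ) - 1) := by
        intro f hf
        show f (a + w) ≤ (k : ℝ) * (mm f : ℝ) - 1
        have hadd := (alc_linear (hF' hf)).map_add a w
        have h1 : f a ≤ (r : ℝ) * (mm f : ℝ) - 1 := haQ f hf
        have h2 := hwD f hf
        have hcast : ((k - r : ℕ) : ℝ) = (k : ℝ) - (r : ℝ) := by
          rw [Nat.cast_sub hk]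
        rw [hcast] at h2
        rw [hadd]
        nlinarith [h1, h2]
      have := latticeHull hF' _ (hbint k) _ hsumQ
      refine convexHull_mono ?_ this
      rintro y ⟨hyD, z, rfl⟩
      exact hQS k hk0 _ hyD ⟨z, rfl⟩
  · -- equality → IsLevel
    intro heq k z hk hzint
    rcases eq_or_lt_of_le hk with rfl | hlt
    · refine ⟨z, 0, hzint, ?_, by ring⟩
      have h00 : ((r - r : ℕ) : ℝ) = 0 := by simp
      rw [h00, Set.zero_smul_set hPne]
      have : (fun i => ((0 : ι → ℤ) i : ℝ)) = (0 : ι → ℝ) := by funext i; simp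
      rw [this]
      exact Set.zero_mem_zero
    · have hk0 : 0 < k := lt_of_le_of_lt (Nat.zero_le r) hlt
      have hzin : (fun i => (z i : ℝ)) ∈ intHull P k :=
        subset_convexHull ℝ _ ⟨hzint, z, rfl⟩
      rw [heq k hk] at hzin
      obtain ⟨a, ha, w0, hw0, hsum⟩ := Set.mem_add.1 hzin
      have haQ : a ∈ Dset F' (fun f => (r : ℝ) * (mm f : ℝ) - 1) := hhull r hr0 ha
      set y : ι → ℤ := fun i => ⌈a i⌉ with hydef
      have hyQ : (fun i => (y i : ℝ)) ∈ Dset F' (fun f => (r : ℝ) * (mm f : ℝ) - 1) := by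
        intro f hf
        show f (fun i => (y i : ℝ)) ≤ (r : ℝ) * (mm f : ℝ) - 1
        have h1 : f a ≤ (r : ℝ) * (mm f : ℝ) - 1 := haQ f hf
        have hcast : (r : ℝ) * (mm f : ℝ) - 1 = (((r : ℤ) * mm f - 1 : ℤ) : ℝ) := by
          push_cast; ring
        rw [hcast] at h1 ⊢
        exact alc_ceil_le (hF' hf) a _ h1
      have hyint : (fun i => (y i : ℝ)) ∈ interior ((r : ℝ) • P) :=
        (hlat r hr0 y).2 (fun f hf => hyQ f hf)
      refine ⟨y, z - y, hyint, ?_, by ring⟩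
      rw [hscale (k - r) (by omega)]
      intro f hf
      have hlin := alc_linear (hF' hf)
      have hcoe : (fun i => ((z - y) i : ℝ)) =
          (fun i => (z i : ℝ)) + (-1 : ℝ) • (fun i => (y i : ℝ)) := by
        funext i
        simp only [Pi.add_apply, Pi.smul_apply, Pi.sub_apply, smul_eq_mul]
        push_cast
        ring
      have hfval : f (fun i => ((z - y) i : ℝ)) =
          f (fun i => (z i : ℝ)) - f (fun i => (y i : ℝ)) := by
        rw [hcoe, hlin.map_add, hlin.map_smul]
        simp [smul_eq_mul]
        ring
      have hfz : f (fun i => (z i : ℝ)) = f a + f w0 := by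
        rw [← hsum] at *
        rw [← hlin.map_add]
      have hw0b : f w0 ≤ ((k - r : ℕ) : ℝ) * (mm f : ℝ) := by
        rw [hscale (k - r) (by omega)] at hw0
        exact hw0 f hf
      have hceil := alc_ceil_gt (hF' hf) a
      obtain ⟨n, hn⟩ := alc_int (hF' hf) (z - y)
      have hKc : ((k - r : ℕ) : ℝ) * (mm f : ℝ) = ((((k - r : ℕ) : ℤ) * mm f : ℤ) : ℝ) := by
        push_cast; ring
      have hlt2 : (n : ℝ) < ((((k - r : ℕ) : ℤ) * mm f : ℤ) : ℝ) + 1 := by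
        rw [← hn, hfval]
        rw [← hKc]
        have : f (fun i => (y i : ℝ)) > f a - 1 := hceil
        linarith [hfz, hw0b, hceil]
      have hn2 : n < ((k - r : ℕ) : ℤ) * mm f + 1 := by exact_mod_cast hlt2
      have hn3 : n ≤ ((k - r : ℕ) : ℤ) * mm f := by omega
      show f (fun i => ((z - y) i : ℝ)) ≤ ((k - r : ℕ) : ℝ) * (mm f : ℝ)
      rw [hn, hKc]
      exact_mod_cast hn3
end

section
/- Let P ⊂ ℝ^d be a lattice polytope and r' ≥ codeg(P) an integer. If there exists an integer k > r' such that (kP)^{(1)} = (r'P)^{(1)} + (k−r')P, then for every integer k' with r' ≤ k' < k one has (k'P)^{(1)} = (r'P)^{(1)} + (k'−r')P. -/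
open scoped Pointwise

section Aux

variable {ι : Type*} [Fintype ι]

/-- Rådström cancellation: if `A + C ⊆ B + C` with `B` closed convex and `C`
nonempty bounded, then `A ⊆ B`. -/
theorem radstrom_cancel {E : Type*} [NormedAddCommGroup E] [NormedSpace ℝ E]
    {A B C : Set E} (hB : Convex ℝ B) (hBc : IsClosed B)
    (hC : Bornology.IsBounded C) (hCne : C.Nonempty) (h : A + C ⊆ B + C) : A ⊆ B := by
  intro a ha
  obtain ⟨c₀, hc₀⟩ := hCne
  have step : ∀ c, c ∈ C → ∃ b, b ∈ B ∧ ∃ c', c' ∈ C ∧ a + c = b + c' := by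
    intro c hc
    obtain ⟨b, hb, c', hc', he⟩ := h (Set.add_mem_add ha hc)
    exact ⟨b, hb, c', hc', he.symm⟩
  choose! f hfB g hgC hEq using step
  set cs : ℕ → E := fun n => g^[n] c₀ with hcs_def
  have hcsC : ∀ n, cs n ∈ C := by
    intro n
    induction n with
    | zero => exact hc₀
    | succ n ih =>
      have : cs (n + 1) = g (cs n) := Function.iterate_succ_apply' g n c₀
      rw [this]; exact hgC _ ih
  have hrec : ∀ n, a + cs n = f (cs n) + cs (n + 1) := by
    intro n
    have : cs (n + 1) = g (cs n) := Function.iterate_succ_apply' g n c₀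
    rw [this]; exact hEq _ (hcsC n)
  set b : ℕ → E := fun n => f (cs n) with hb_def
  have hbB : ∀ n, b n ∈ B := fun n => hfB _ (hcsC n)
  have key : ∀ n : ℕ, n • a + cs 0 = (∑ i ∈ Finset.range n, b i) + cs n := by
    intro n
    induction n with
    | zero => simp
    | succ n ih =>
      rw [succ_nsmul, Finset.sum_range_succ]
      have h2 : a + cs n = b n + cs (n + 1) := hrec n
      calc n • a + a + cs 0 = (n • a + cs 0) + (a + cs n) - cs n := by abel
        _ = ((∑ i ∈ Finset.range n, b i) + cs n) + (b n + cs (n + 1)) - cs n := by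
            rw [ih, h2]
        _ = ((∑ i ∈ Finset.range n, b i) + b n) + cs (n + 1) := by abel
  -- bound on C
  obtain ⟨R, hR⟩ := hC.exists_norm_le
  -- average sequence
  set avg : ℕ → E := fun n => (n : ℝ)⁻¹ • ∑ i ∈ Finset.range n, b i with havg_def
  have havgB : ∀ n : ℕ, 1 ≤ n → avg n ∈ B := by
    intro n hn
    have hn' : (0 : ℝ) < n := by exact_mod_cast hn
    have := hB.sum_mem (t := Finset.range n) (w := fun _ => (n : ℝ)⁻¹) (z := b)
      (fun i _ => by positivity)
      (by simp [Finset.sum_const, Finset.card_range]; field_simp)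
      (fun i _ => hbB i)
    simpa [havg_def, Finset.smul_sum] using this
  have hdiff : ∀ n : ℕ, 1 ≤ n → a - avg n = (n : ℝ)⁻¹ • (cs n - cs 0) := by
    intro n hn
    have hn' : (0 : ℝ) < n := by exact_mod_cast hn
    have hkey := key n
    have : (∑ i ∈ Finset.range n, b i) = n • a + cs 0 - cs n := by
      rw [hkey]; abel
    simp only [havg_def]
    rw [this]
    have hna : (n : ℝ)⁻¹ • (n • a) = a := by
      rw [← Nat.cast_smul_eq_nsmul ℝ, smul_smul, inv_mul_cancel₀ hn'.ne', one_smul]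
    rw [smul_sub, smul_add, hna, smul_sub]
    abel
  have hnorm : ∀ n : ℕ, 1 ≤ n → ‖a - avg n‖ ≤ (2 * R) / n := by
    intro n hn
    have hn' : (0 : ℝ) < n := by exact_mod_cast hn
    rw [hdiff n hn, norm_smul]
    have h1 : ‖cs n - cs 0‖ ≤ 2 * R := by
      calc ‖cs n - cs 0‖ ≤ ‖cs n‖ + ‖cs 0‖ := norm_sub_le _ _
        _ ≤ R + R := add_le_add (hR _ (hcsC n)) (hR _ (hcsC 0))
        _ = 2 * R := by ring
    calc ‖(n : ℝ)⁻¹‖ * ‖cs n - cs 0‖ = (n : ℝ)⁻¹ * ‖cs n - cs 0‖ := by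
          rw [norm_inv, Real.norm_natCast]
      _ ≤ (n : ℝ)⁻¹ * (2 * R) := by
          apply mul_le_mul_of_nonneg_left h1 (by positivity)
      _ = (2 * R) / n := by rw [div_eq_mul_inv]; ring
  have htend : Filter.Tendsto avg Filter.atTop (nhds a) := by
    rw [tendsto_iff_norm_sub_tendsto_zero]
    refine squeeze_zero' (Filter.Eventually.of_forall fun n => norm_nonneg _) ?_
      (tendsto_const_div_atTop_nhds_zero_nat (2 * R))
    filter_upwards [Filter.eventually_ge_atTop 1] with n hn
    rw [norm_sub_rev]
    exact hnorm n hn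
  exact hBc.mem_of_tendsto htend
    (Filter.eventually_atTop.2 ⟨1, fun n hn => havgB n hn⟩)

end Aux

section Aux2

variable {ι : Type*} [Fintype ι]

/-- The defining set of interior lattice points. -/
def intPts (P : Set (ι → ℝ)) (m : ℕ) : Set (ι → ℝ) :=
  {x | x ∈ interior ((m : ℝ) • P) ∧ ∃ z : ι → ℤ, x = fun i => (z i : ℝ)}

theorem intHull_eq (P : Set (ι → ℝ)) (m : ℕ) :
    intHull P m = convexHull ℝ (intPts P m) := rfl

/-- The set of interior lattice points is finite when `P` is compact. -/
theorem intPts_finite (P : Set (ι → ℝ)) (hcpt : IsCompact P) (m : ℕ) :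
    (intPts P m).Finite := by
  classical
  have hcpt' : IsCompact ((m : ℝ) • P) := hcpt.smul (m : ℝ)
  obtain ⟨R, hR⟩ := hcpt'.isBounded.exists_norm_le
  set N : ℤ := ⌈R⌉
  have key : intPts P m ⊆
      (fun (z : ι → ℤ) => fun i => (z i : ℝ)) '' (Set.Icc (fun _ => -N) (fun _ => N)) := by
    rintro x ⟨hx, z, rfl⟩
    refine ⟨z, ?_, rfl⟩
    have hxP : (fun i => (z i : ℝ)) ∈ (m : ℝ) • P := interior_subset hx
    have hnx := hR _ hxP
    constructor <;> intro i <;>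
    · have h1 : |(z i : ℝ)| ≤ R := by
        calc |(z i : ℝ)| = ‖(fun i => (z i : ℝ)) i‖ := by simp [Real.norm_eq_abs]
          _ ≤ ‖(fun i => (z i : ℝ))‖ := norm_le_pi_norm (fun j => ((z j : ℝ))) i
          _ ≤ R := hnx
      have h2 : |z i| ≤ N := by
        have : ((|z i| : ℤ) : ℝ) ≤ (N : ℝ) := by
          push_cast
          calc |(z i : ℝ)| ≤ R := h1
            _ ≤ (⌈R⌉ : ℝ) := Int.le_ceil R
        exact_mod_cast this
      simp only [abs_le] at h2
      first
        | exact h2.1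
        | exact h2.2
  exact Set.Finite.subset ((Set.finite_Icc _ _).image _) key

theorem intHull_compact (P : Set (ι → ℝ)) (hcpt : IsCompact P) (m : ℕ) :
    IsCompact (intHull P m) :=
  (intPts_finite P hcpt m).isCompact_convexHull (𝕜 := ℝ)

/-- Key inclusion: `(aP)^{(1)} + bP ⊆ ((a+b)P)^{(1)}`. -/
theorem intHull_add_subset (P : Set (ι → ℝ))
    (hP : ∃ V : Finset (ι → ℤ),
      P = convexHull ℝ ((fun (z : ι → ℤ) => fun i => (z i : ℝ)) '' (V : Set (ι → ℤ))))
    (a b : ℕ) :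
    intHull P a + ((b : ℕ) : ℝ) • P ⊆ intHull P (a + b) := by
  obtain ⟨V, hV⟩ := hP
  have hPc : Convex ℝ P := hV ▸ convex_convexHull ℝ _
  have hsmul : ((b : ℕ) : ℝ) • P =
      convexHull ℝ (((b : ℕ) : ℝ) • ((fun (z : ι → ℤ) => fun i => (z i : ℝ)) '' (V : Set (ι → ℤ)))) := by
    rw [convexHull_smul, ← hV]
  rw [intHull_eq, intHull_eq, hsmul, ← convexHull_add]
  apply convexHull_mono
  rintro x ⟨s, hs, t, ht, rfl⟩
  obtain ⟨hsi, z, rfl⟩ := hs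
  obtain ⟨y, ⟨w, hw, rfl⟩, rfl⟩ := ht
  have hwP : (fun i => (w i : ℝ)) ∈ P := by
    rw [hV]; exact subset_convexHull ℝ _ ⟨w, hw, rfl⟩
  have htP : ((b : ℕ) : ℝ) • (fun i => (w i : ℝ)) ∈ ((b : ℕ) : ℝ) • P :=
    Set.smul_mem_smul_set hwP
  constructor
  · -- interior part
    have hsum : (((a + b : ℕ)) : ℝ) • P = ((a : ℕ) : ℝ) • P + ((b : ℕ) : ℝ) • P := by
      push_cast
      exact hPc.add_smul (by positivity) (by positivity)
    rw [hsum]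
    have hopen : IsOpen (interior (((a : ℕ) : ℝ) • P) + ((b : ℕ) : ℝ) • P) :=
      isOpen_interior.add_right
    have hsub : interior (((a : ℕ) : ℝ) • P) + ((b : ℕ) : ℝ) • P ⊆
        ((a : ℕ) : ℝ) • P + ((b : ℕ) : ℝ) • P :=
      Set.add_subset_add_right interior_subset
    exact interior_maximal hsub hopen (Set.add_mem_add hsi htP)
  · -- lattice part
    refine ⟨z + (b : ℤ) • w, ?_⟩
    funext i
    simp only [Pi.add_apply, Pi.smul_apply, smul_eq_mul, Int.cast_add, Int.cast_mul,
      Int.cast_natCast]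

end Aux2

/-- Let `P` be a lattice polytope and `r' ≥ codeg(P)`. If for some `k > r'` one has
`(kP)^{(1)} = (r'P)^{(1)} + (k − r')P`, then for every `r' ≤ k' < k` one has
`(k'P)^{(1)} = (r'P)^{(1)} + (k' − r')P`. -/
theorem stmt_14 {ι : Type*} [Fintype ι] (P : Set (ι → ℝ))
    (hP : ∃ V : Finset (ι → ℤ), P = convexHull ℝ ((fun (z : ι → ℤ) => fun i => (z i : ℝ)) '' (V : Set (ι → ℤ))))
    (c r' k : ℕ) (hc : IsLeast (codegSet P) c) (hr' : c ≤ r') (hk : r' < k)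
    (h : intHull P k = intHull P r' + (((k - r' : ℕ) : ℝ)) • P) :
    ∀ k' : ℕ, r' ≤ k' → k' < k →
      intHull P k' = intHull P r' + (((k' - r' : ℕ) : ℝ)) • P := by
  intro k' hk'1 hk'2
  obtain ⟨V, hV⟩ := hP
  have hPc : Convex ℝ P := hV ▸ convex_convexHull ℝ _
  have hPcpt : IsCompact P := hV ▸ ((V.finite_toSet.image _).isCompact_convexHull (𝕜 := ℝ))
  have hPne : P.Nonempty := by
    obtain ⟨⟨hcpos, z, hz⟩, -⟩ := hc
    have : ((c : ℝ) • P).Nonempty := ⟨_, interior_subset hz⟩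
    obtain ⟨y, x, hx, -⟩ := this
    exact ⟨x, hx⟩
  have hPex : ∃ V : Finset (ι → ℤ),
      P = convexHull ℝ ((fun (z : ι → ℤ) => fun i => (z i : ℝ)) '' (V : Set (ι → ℤ))) := ⟨V, hV⟩
  -- the easy inclusion
  have hsup : intHull P r' + (((k' - r' : ℕ)) : ℝ) • P ⊆ intHull P k' := by
    have := intHull_add_subset P hPex r' (k' - r')
    rwa [show r' + (k' - r') = k' from by omega] at this
  -- decomposition of the long dilate
  have hdecomp : (((k - r' : ℕ)) : ℝ) • P =
      (((k' - r' : ℕ)) : ℝ) • P + (((k - k' : ℕ)) : ℝ) • P := by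
    rw [show (k - r' : ℕ) = (k' - r') + (k - k') from by omega, Nat.cast_add]
    exact hPc.add_smul (by positivity) (by positivity)
  -- the hard inclusion via Rådström cancellation
  have hsub : intHull P k' ⊆ intHull P r' + (((k' - r' : ℕ)) : ℝ) • P := by
    apply radstrom_cancel (C := (((k - k' : ℕ)) : ℝ) • P)
    · exact (convex_convexHull ℝ _).add (hPc.smul _)
    · exact ((intHull_compact P hPcpt r').add (hPcpt.smul _)).isClosed
    · exact (hPcpt.smul ((k - k' : ℕ) : ℝ)).isBounded
    · exact hPne.smul_set
    · calc intHull P k' + (((k - k' : ℕ)) : ℝ) • P ⊆ intHull P (k' + (k - k')) :=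
            intHull_add_subset P hPex k' (k - k')
        _ = intHull P k := by rw [show k' + (k - k') = k from by omega]
        _ = intHull P r' + (((k - r' : ℕ)) : ℝ) • P := h
        _ = (intHull P r' + (((k' - r' : ℕ)) : ℝ) • P) + (((k - k' : ℕ)) : ℝ) • P := by
            rw [hdecomp, add_assoc]
  exact Set.Subset.antisymm hsub hsup
end
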